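/- arXiv:1005.0486 — 3 statements merged into one kernel-verified Lean document; each statement's English description precedes it below -/
import Mathlib

section
/- Let b₀, b₁ be C² functions of z on an interval with b₁ ≥ ε₀ > 0, and suppose for a parameter r the function z ↦ b₀(z) + r b₁(z) has exactly two simple zeros z⁻ < z⁺ between which it is negative, with (b₀ + rb₁)' nonvanishing at z^±. Define η(r) = ∫_{z⁻(r)}^{z⁺(r)} (-b₀(z) - r b₁(z))^{1/2} dz. Then η is differentiable in r and η'(r) = -½ ∫_{z⁻}^{z⁺} b₁(z)·(-b₀(z) - rb₁(z))^{-1/2} dz; in particular -η'(r) equals half the 'period' integral ∫ b₁ (-b₀-rb₁)^{-1/2} dz, and η is strictly decreasing in r. -/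
open Set MeasureTheory Filter
open Set

lemma abs_sqrt_sub_sqrt (a b : ℝ) : |Real.sqrt a - Real.sqrt b| ≤ Real.sqrt |a - b| := by
  wlog h : b ≤ a generalizing a b
  · rw [abs_sub_comm, abs_sub_comm a b]; exact this b a (le_of_not_ge h)
  rcases le_or_gt a 0 with ha | ha
  · rw [Real.sqrt_eq_zero'.2 ha, Real.sqrt_eq_zero'.2 (h.trans ha)]
    simp [Real.sqrt_nonneg]
  rcases le_or_gt b 0 with hb | hb
  · rw [Real.sqrt_eq_zero'.2 hb, sub_zero, abs_of_nonneg (Real.sqrt_nonneg a),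
      abs_of_nonneg (by linarith : (0:ℝ) ≤ a - b)]
    exact Real.sqrt_le_sqrt (by linarith)
  · have h1 : Real.sqrt b ≤ Real.sqrt a := Real.sqrt_le_sqrt h
    rw [abs_of_nonneg (by linarith), abs_of_nonneg (by linarith)]
    nlinarith [Real.sq_sqrt ha.le, Real.sq_sqrt hb.le, Real.sq_sqrt (show (0:ℝ) ≤ a - b by linarith),
      Real.sqrt_nonneg a, Real.sqrt_nonneg b, Real.sqrt_nonneg (a-b),
      Real.sqrt_le_sqrt (show b ≤ a from h)]

lemma sqrt_taylor (a t : ℝ) (ha : 0 < a) (ht : |t| ≤ a / 2) :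
    |Real.sqrt (a - t) - Real.sqrt a + t / (2 * Real.sqrt a)| ≤ t ^ 2 / (a * Real.sqrt a) := by
  have hat : 0 ≤ a - t := by cases abs_le.1 ht; linarith
  have hs2 : 0 < Real.sqrt a := Real.sqrt_pos.2 ha
  have hs1 : 0 ≤ Real.sqrt (a - t) := Real.sqrt_nonneg _
  have e1 : Real.sqrt (a - t) ^ 2 = a - t := Real.sq_sqrt hat
  have e2 : Real.sqrt a ^ 2 = a := Real.sq_sqrt ha.le
  set s1 := Real.sqrt (a - t)
  set s2 := Real.sqrt a
  have h12 : 0 < s1 + s2 := by linarith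
  have hd : (s1 - s2) * (s1 + s2) = -t := by ring_nf; linear_combination e1 - e2
  have key : s1 - s2 + t / (2 * s2) = -(t ^ 2) / (2 * s2 * (s1 + s2) ^ 2) := by
    field_simp
    linear_combination (2*s2*(s1+s2) + t) * hd
  rw [key]
  rw [abs_div, abs_neg, abs_of_nonneg (sq_nonneg t), abs_of_pos (by positivity)]
  rw [div_le_div_iff₀ (by positivity) (by positivity)]
  have h3 : a * s2 ≤ 2 * s2 * (s1 + s2) ^ 2 := by nlinarith [sq_nonneg s1, sq_nonneg (s1*s2)]
  exact mul_le_mul_of_nonneg_left h3 (sq_nonneg t)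

lemma mvt_ge {g g' : ℝ → ℝ} {a b C : ℝ} (hab : a ≤ b)
    (hg : ∀ x ∈ Icc a b, HasDerivAt g (g' x) x) (hC : ∀ x ∈ Icc a b, C ≤ g' x) :
    C * (b - a) ≤ g b - g a := by
  rcases eq_or_lt_of_le hab with rfl | h
  · simp
  obtain ⟨c, hc, hceq⟩ := exists_hasDerivAt_eq_slope g g' h
    (fun x hx => (hg x hx).continuousAt.continuousWithinAt)
    (fun x hx => hg x (Ioo_subset_Icc_self hx))
  have h2 := hC c (Ioo_subset_Icc_self hc)
  rw [hceq] at h2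
  have := (le_div_iff₀ (by linarith : (0:ℝ) < b - a)).1 h2
  linarith

lemma mvt_le {g g' : ℝ → ℝ} {a b C : ℝ} (hab : a ≤ b)
    (hg : ∀ x ∈ Icc a b, HasDerivAt g (g' x) x) (hC : ∀ x ∈ Icc a b, g' x ≤ C) :
    g b - g a ≤ C * (b - a) := by
  have h := mvt_ge (g := fun x => -g x) (g' := fun x => -g' x) (C := -C) hab
    (fun x hx => (hg x hx).neg) (fun x hx => neg_le_neg (hC x hx))
  linarith

lemma invsqrt_integral_right (a q : ℝ) (h : a ≤ q) :
    ∫ z in a..q, (q - z) ^ (-(1/2) : ℝ) = 2 * Real.sqrt (q - a) := by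
  rw [intervalIntegral.integral_comp_sub_left (fun x => x ^ (-(1/2):ℝ)) q, sub_self]
  rw [integral_rpow (Or.inl (by norm_num))]
  rw [Real.sqrt_eq_rpow]
  norm_num
  ring

lemma invsqrt_integrable_right (a q : ℝ) :
    IntervalIntegrable (fun z => (q - z) ^ (-(1/2) : ℝ)) volume a q := by
  have := (intervalIntegral.intervalIntegrable_rpow' (a := q - a) (b := q - q)
    (r := -(1/2)) (by norm_num)).comp_sub_left q
  simpa using this

lemma invsqrt_integral_left (p b : ℝ) (h : p ≤ b) :
    ∫ z in p..b, (z - p) ^ (-(1/2) : ℝ) = 2 * Real.sqrt (b - p) := by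
  rw [intervalIntegral.integral_comp_sub_right (fun x => x ^ (-(1/2):ℝ)) p, sub_self]
  rw [integral_rpow (Or.inl (by norm_num))]
  rw [Real.sqrt_eq_rpow]
  norm_num
  ring

lemma invsqrt_integrable_left (p b : ℝ) :
    IntervalIntegrable (fun z => (z - p) ^ (-(1/2) : ℝ)) volume p b := by
  have := (intervalIntegral.intervalIntegrable_rpow' (a := p - p) (b := b - p)
    (r := -(1/2)) (by norm_num)).comp_sub_right p
  simpa using this

/-- Generic domination lemma: if `g` is continuous on `Ioo a b` and `|g| ≤ ψ` there with
`ψ` interval integrable, then `g` is interval integrable and `∫ g ≤ ∫ ψ`. -/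
lemma dominated_interval {g ψ : ℝ → ℝ} {a b : ℝ} (hab : a ≤ b)
    (hψ : IntervalIntegrable ψ volume a b)
    (hg : ContinuousOn g (Ioo a b))
    (hbound : ∀ z ∈ Ioo a b, |g z| ≤ ψ z) :
    IntervalIntegrable g volume a b ∧ ∫ z in a..b, g z ≤ ∫ z in a..b, ψ z := by
  have hgi : IntervalIntegrable g volume a b := by
    rw [intervalIntegrable_iff, uIoc_of_le hab, integrableOn_Ioc_iff_integrableOn_Ioo]
    refine Integrable.mono' ((intervalIntegrable_iff.1 hψ).mono_set ?_)
      (hg.aestronglyMeasurable measurableSet_Ioo) ?_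
    · rw [uIoc_of_le hab]; exact Ioo_subset_Ioc_self
    · filter_upwards [ae_restrict_mem measurableSet_Ioo] with z hz
      exact hbound z hz
  refine ⟨hgi, ?_⟩
  refine intervalIntegral.integral_mono_ae_restrict hab hgi hψ ?_
  rw [← Measure.restrict_congr_set (Ioo_ae_eq_Icc)]
  filter_upwards [ae_restrict_mem measurableSet_Ioo] with z hz
  exact (le_abs_self _).trans (hbound z hz)

lemma deriv_pos_at_right_zero {F : ℝ → ℝ} {p q d : ℝ} (hpq : p < q)
    (hF : HasDerivAt F d q) (hneg : ∀ z ∈ Ioo p q, F z < 0) (hq : F q = 0) (hd : d ≠ 0) :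
    0 < d := by
  rcases hd.lt_or_gt with h | h
  · exfalso
    have hslope : Tendsto (slope F q) (nhdsWithin q (Iio q)) (nhds d) :=
      (hasDerivAt_iff_tendsto_slope.1 hF).mono_left
        (nhdsWithin_mono q (fun z hz => Set.mem_compl_singleton_iff.2 (ne_of_lt hz)))
    have hev : ∀ᶠ z in nhdsWithin q (Iio q), 0 ≤ slope F q z := by
      filter_upwards [Ioo_mem_nhdsLT_of_mem (⟨hpq, le_refl q⟩ : q ∈ Ioc p q)] with z hz
      have h1 : F z < 0 := hneg z hz
      have h2 : z - q < 0 := by simpa using sub_neg.2 hz.2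
      rw [slope_def_field, hq, sub_zero]
      exact div_nonneg_of_nonpos h1.le h2.le
    have := ge_of_tendsto hslope hev
    linarith
  · exact h

lemma deriv_neg_at_left_zero {F : ℝ → ℝ} {p q d : ℝ} (hpq : p < q)
    (hF : HasDerivAt F d p) (hneg : ∀ z ∈ Ioo p q, F z < 0) (hp : F p = 0) (hd : d ≠ 0) :
    d < 0 := by
  have hG : HasDerivAt (fun x => F (2 * p - x)) (-d) p := by
    have h1 : HasDerivAt (fun x : ℝ => 2 * p - x) (-1) p := by
      simpa using (hasDerivAt_id p).const_sub (2 * p)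
    have h2 : (2:ℝ) * p - p = p := by ring
    have hF2 : HasDerivAt F d (2 * p - p) := by rw [h2]; exact hF
    have := hF2.comp p h1
    simpa [Function.comp_def] using this
  have := deriv_pos_at_right_zero (p := 2 * p - q) (q := p) (by linarith) hG
    (fun z hz => hneg (2 * p - z) ⟨by linarith [hz.2], by linarith [hz.1]⟩)
    (by rw [show 2*p-p = p by ring, hp]) (by simpa using hd)
  linarith

lemma window_gt {db₀ db₁ : ℝ → ℝ} (h0 : Continuous db₀) (h1 : Continuous db₁)
    {x₀ r c : ℝ} (hc : c < db₀ x₀ + r * db₁ x₀) :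
    ∃ δ > 0, ∀ s, |s - r| ≤ δ → ∀ z, |z - x₀| ≤ δ → c < db₀ z + s * db₁ z := by
  have hφ : Continuous (fun w : ℝ × ℝ => db₀ w.1 + w.2 * db₁ w.1) := by fun_prop
  have hopen : IsOpen {w : ℝ × ℝ | c < db₀ w.1 + w.2 * db₁ w.1} :=
    isOpen_lt continuous_const hφ
  obtain ⟨ε, hε, hball⟩ := Metric.isOpen_iff.1 hopen (x₀, r) hc
  refine ⟨ε / 2, by positivity, fun s hs z hz => ?_⟩
  have hdist : dist (z, s) (x₀, r) ≤ ε / 2 := by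
    rw [Prod.dist_eq]
    exact max_le (by rw [Real.dist_eq]; exact hz) (by rw [Real.dist_eq]; exact hs)
  exact hball (Metric.mem_ball.2 (lt_of_le_of_lt hdist (by linarith)))
lemma inv_sqrt_rpow (x : ℝ) (hx : 0 ≤ x) : (Real.sqrt x)⁻¹ = x ^ (-(1/2) : ℝ) := by
  rw [Real.rpow_neg hx, Real.sqrt_eq_rpow]

section KEY
variable {A B r₁ r₂ ε₀ : ℝ} {b₀ b₁ zm zp : ℝ → ℝ}

set_option maxHeartbeats 4000000 in
lemma key (hb₀ : ContDiff ℝ 2 b₀) (hb₁ : ContDiff ℝ 2 b₁) (hε₀ : 0 < ε₀)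
    (hb₁lb : ∀ z ∈ Icc A B, ε₀ ≤ b₁ z)
    (hz : ∀ r ∈ Ioo r₁ r₂, A < zm r ∧ zm r < zp r ∧ zp r < B)
    (hneg : ∀ r ∈ Ioo r₁ r₂, ∀ z ∈ Ioo (zm r) (zp r), b₀ z + r * b₁ z < 0)
    (hzero : ∀ r ∈ Ioo r₁ r₂,
      b₀ (zm r) + r * b₁ (zm r) = 0 ∧ b₀ (zp r) + r * b₁ (zp r) = 0)
    (hpos : ∀ r ∈ Ioo r₁ r₂, ∀ z ∈ Icc A B,
      z ∉ Icc (zm r) (zp r) → 0 < b₀ z + r * b₁ z)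
    (hsimple : ∀ r ∈ Ioo r₁ r₂,
      deriv (fun z => b₀ z + r * b₁ z) (zm r) ≠ 0 ∧
      deriv (fun z => b₀ z + r * b₁ z) (zp r) ≠ 0)
    {r : ℝ} (hrmem : r ∈ Ioo r₁ r₂) :
    HasDerivAt (fun s => ∫ z in (zm s)..(zp s), Real.sqrt (-(b₀ z + s * b₁ z)))
      (-(1 / 2) * ∫ z in (zm r)..(zp r), b₁ z / Real.sqrt (-(b₀ z + r * b₁ z))) r ∧
    0 < ∫ z in (zm r)..(zp r), b₁ z / Real.sqrt (-(b₀ z + r * b₁ z)) := by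
  obtain ⟨hA, hpq, hB⟩ := hz r hrmem
  set p := zm r with hp
  set q := zp r with hq
  obtain ⟨hzerop, hzeroq⟩ := hzero r hrmem
  have hABr : Icc p q ⊆ Icc A B := Icc_subset_Icc hA.le hB.le
  have hIpq : Ioo p q ⊆ Icc A B := fun z hz => hABr (Ioo_subset_Icc_self hz)
  -- basic regularity
  have hb0c : Continuous b₀ := hb₀.continuous
  have hb1c : Continuous b₁ := hb₁.continuous
  have hb0d : ∀ x : ℝ, HasDerivAt b₀ (deriv b₀ x) x := fun x =>
    ((hb₀.differentiable (by norm_num)) x).hasDerivAt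
  have hb1d : ∀ x : ℝ, HasDerivAt b₁ (deriv b₁ x) x := fun x =>
    ((hb₁.differentiable (by norm_num)) x).hasDerivAt
  have hdb0c : Continuous (deriv b₀) := hb₀.continuous_deriv (by norm_num)
  have hdb1c : Continuous (deriv b₁) := hb₁.continuous_deriv (by norm_num)
  have hfd : ∀ s x : ℝ, HasDerivAt (fun z => b₀ z + s * b₁ z)
      (deriv b₀ x + s * deriv b₁ x) x := fun s x => (hb0d x).add ((hb1d x).const_mul s)
  have hder : ∀ s x : ℝ, deriv (fun z => b₀ z + s * b₁ z) x
      = deriv b₀ x + s * deriv b₁ x := fun s x => (hfd s x).deriv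
  -- signs of the derivative at the simple zeros
  have hdq : 0 < deriv b₀ q + r * deriv b₁ q :=
    deriv_pos_at_right_zero hpq (hfd r q) (hneg r hrmem) hzeroq
      (by rw [← hder]; exact (hsimple r hrmem).2)
  have hdp : deriv b₀ p + r * deriv b₁ p < 0 :=
    deriv_neg_at_left_zero hpq (hfd r p) (hneg r hrmem) hzerop
      (by rw [← hder]; exact (hsimple r hrmem).1)
  set c : ℝ := min (deriv b₀ q + r * deriv b₁ q) (-(deriv b₀ p + r * deriv b₁ p)) / 2
    with hcdef
  have hc : 0 < c := by
    have := lt_min hdq (by linarith : (0:ℝ) < -(deriv b₀ p + r * deriv b₁ p))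
    positivity
  -- windows around p and q where the z-derivative is uniformly signed
  obtain ⟨δq, hδqpos, hδq⟩ := window_gt hdb0c hdb1c (x₀ := q) (r := r) (c := c)
    (by have := min_le_left (deriv b₀ q + r * deriv b₁ q)
          (-(deriv b₀ p + r * deriv b₁ p)); linarith)
  obtain ⟨δp, hδppos, hδp'⟩ := window_gt (h0 := hdb0c.neg) (h1 := hdb1c.neg)
    (x₀ := p) (r := r) (c := c)
    (by have := min_le_right (deriv b₀ q + r * deriv b₁ q)
          (-(deriv b₀ p + r * deriv b₁ p)); simp only [Pi.neg_apply]; linarith)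
  have hδp : ∀ s, |s - r| ≤ δp → ∀ z, |z - p| ≤ δp →
      deriv b₀ z + s * deriv b₁ z ≤ -c := by
    intro s hs z hz
    have := hδp' s hs z hz
    simp only [Pi.neg_apply] at this
    linarith
  -- bound on b₁
  obtain ⟨M0, hM0⟩ := isCompact_Icc.exists_bound_of_continuousOn (hb1c.continuousOn (s := Icc A B))
  set M : ℝ := max M0 1 with hMdef
  have hM1 : (1:ℝ) ≤ M := le_max_right _ _
  have hMpos : (0:ℝ) < M := lt_of_lt_of_le one_pos hM1
  have hMb : ∀ z ∈ Icc A B, |b₁ z| ≤ M := fun z hz =>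
    le_trans (by simpa using hM0 z hz) (le_max_left _ _)
  -- choose δ₀
  set δ₀ : ℝ := min (min δq δp) (min (min ((q - p)/4) (min (p - A) (B - q)))
    (min (r - r₁) (r₂ - r))) with hδ₀def
  have hδ₀pos : 0 < δ₀ := by
    rcases hrmem with ⟨h1, h2⟩
    refine lt_min (lt_min hδqpos hδppos) (lt_min (lt_min ?_ (lt_min ?_ ?_)) (lt_min ?_ ?_)) <;>
      linarith
  have hδ₀q : δ₀ ≤ δq := le_trans (min_le_left _ _) (min_le_left _ _)
  have hδ₀p : δ₀ ≤ δp := le_trans (min_le_left _ _) (min_le_right _ _)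
  have hδ₀pq : δ₀ ≤ (q - p)/4 :=
    le_trans (min_le_right _ _) (le_trans (min_le_left _ _) (min_le_left _ _))
  have hδ₀A : δ₀ ≤ p - A := le_trans (min_le_right _ _)
    (le_trans (min_le_left _ _) (le_trans (min_le_right _ _) (min_le_left _ _)))
  have hδ₀B : δ₀ ≤ B - q := le_trans (min_le_right _ _)
    (le_trans (min_le_left _ _) (le_trans (min_le_right _ _) (min_le_right _ _)))
  have hδ₀r₁ : δ₀ ≤ r - r₁ := le_trans (min_le_right _ _)
    (le_trans (min_le_right _ _) (min_le_left _ _))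
  have hδ₀r₂ : δ₀ ≤ r₂ - r := le_trans (min_le_right _ _)
    (le_trans (min_le_right _ _) (min_le_right _ _))
  -- MVT estimates on the windows
  have hup : ∀ s, |s - r| ≤ δ₀ → ∀ z ∈ Icc (q - δ₀) q,
      b₀ z + s * b₁ z ≤ (s - r) * b₁ q - c * (q - z) := by
    intro s hs z hz
    have key := mvt_ge (g := fun z => b₀ z + s * b₁ z)
      (g' := fun x => deriv b₀ x + s * deriv b₁ x) (C := c) hz.2
      (fun x _ => hfd s x)
      (fun x hx => (hδq s (le_trans hs hδ₀q) x (abs_le.2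
        ⟨by linarith [hx.1, hz.1], by linarith [hx.2]⟩)).le)
    have hfq : b₀ q + s * b₁ q = (s - r) * b₁ q := by linear_combination hzeroq
    linarith
  have hup' : ∀ s, |s - r| ≤ δ₀ → ∀ z ∈ Icc q (q + δ₀),
      (s - r) * b₁ q + c * (z - q) ≤ b₀ z + s * b₁ z := by
    intro s hs z hz
    have key := mvt_ge (g := fun z => b₀ z + s * b₁ z)
      (g' := fun x => deriv b₀ x + s * deriv b₁ x) (C := c) hz.1
      (fun x _ => hfd s x)
      (fun x hx => (hδq s (le_trans hs hδ₀q) x (abs_le.2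
        ⟨by linarith [hx.1], by linarith [hx.2, hz.2]⟩)).le)
    have hfq : b₀ q + s * b₁ q = (s - r) * b₁ q := by linear_combination hzeroq
    linarith
  have hlp : ∀ s, |s - r| ≤ δ₀ → ∀ z ∈ Icc p (p + δ₀),
      b₀ z + s * b₁ z ≤ (s - r) * b₁ p - c * (z - p) := by
    intro s hs z hz
    have key := mvt_le (g := fun z => b₀ z + s * b₁ z)
      (g' := fun x => deriv b₀ x + s * deriv b₁ x) (C := -c) hz.1
      (fun x _ => hfd s x)
      (fun x hx => hδp s (le_trans hs hδ₀p) x (abs_le.2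
        ⟨by linarith [hx.1], by linarith [hx.2, hz.2]⟩))
    have hfp : b₀ p + s * b₁ p = (s - r) * b₁ p := by linear_combination hzerop
    linarith
  have hlp' : ∀ s, |s - r| ≤ δ₀ → ∀ z ∈ Icc (p - δ₀) p,
      (s - r) * b₁ p + c * (p - z) ≤ b₀ z + s * b₁ z := by
    intro s hs z hz
    have key := mvt_le (g := fun z => b₀ z + s * b₁ z)
      (g' := fun x => deriv b₀ x + s * deriv b₁ x) (C := -c) hz.2
      (fun x _ => hfd s x)
      (fun x hx => hδp s (le_trans hs hδ₀p) x (abs_le.2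
        ⟨by linarith [hx.1, hz.1], by linarith [hx.2]⟩))
    have hfp : b₀ p + s * b₁ p = (s - r) * b₁ p := by linear_combination hzerop
    linarith
  -- far minima
  have hfar : ∃ m₁ > 0, (∀ z ∈ Icc A (p - δ₀), m₁ ≤ b₀ z + r * b₁ z) ∧
      (∀ z ∈ Icc (q + δ₀) B, m₁ ≤ b₀ z + r * b₁ z) := by
    have hco : ContinuousOn (fun z => b₀ z + r * b₁ z) univ := by fun_prop
    obtain ⟨x₁, hx₁m, hx₁⟩ := isCompact_Icc.exists_isMinOn
      (nonempty_Icc.2 (by linarith) : (Icc A (p - δ₀)).Nonempty) (hco.mono (subset_univ _))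
    obtain ⟨x₂, hx₂m, hx₂⟩ := isCompact_Icc.exists_isMinOn
      (nonempty_Icc.2 (by linarith) : (Icc (q + δ₀) B).Nonempty) (hco.mono (subset_univ _))
    have hv₁ : 0 < b₀ x₁ + r * b₁ x₁ := by
      refine hpos r hrmem x₁ ⟨hx₁m.1, by linarith [hx₁m.2]⟩ ?_
      intro hmem
      have := hmem.1
      have := hx₁m.2
      simp only [← hp] at *
      linarith
    have hv₂ : 0 < b₀ x₂ + r * b₁ x₂ := by
      refine hpos r hrmem x₂ ⟨by linarith [hx₂m.1], hx₂m.2⟩ ?_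
      intro hmem
      have := hmem.2
      have := hx₂m.1
      simp only [← hq] at *
      linarith
    refine ⟨min (b₀ x₁ + r * b₁ x₁) (b₀ x₂ + r * b₁ x₂), lt_min hv₁ hv₂,
      fun z hz => le_trans (min_le_left _ _) (hx₁ hz),
      fun z hz => le_trans (min_le_right _ _) (hx₂ hz)⟩
  obtain ⟨m₁, hm₁pos, hfar₁, hfar₂⟩ := hfar
  -- interior minimum of -(b₀ + r b₁)
  have hpmid : p + δ₀ ≤ q - δ₀ := by linarith
  have hmid : ∃ m₂ > 0, ∀ z ∈ Icc (p + δ₀) (q - δ₀), m₂ ≤ -(b₀ z + r * b₁ z) := by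
    obtain ⟨x₃, hx₃m, hx₃⟩ := isCompact_Icc.exists_isMinOn
      (nonempty_Icc.2 hpmid : (Icc (p + δ₀) (q - δ₀)).Nonempty)
      (Continuous.continuousOn (by fun_prop) :
        ContinuousOn (fun z => -(b₀ z + r * b₁ z)) _)
    refine ⟨-(b₀ x₃ + r * b₁ x₃), by
      have := hneg r hrmem x₃ ⟨by linarith [hx₃m.1], by linarith [hx₃m.2]⟩
      linarith, fun z hz => hx₃ hz⟩
  obtain ⟨m₂, hm₂pos, hmid⟩ := hmid
  -- lower bound for -(b₀ + r b₁) on shrunk intervals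
  have hcore_lb : ∀ δ, 0 < δ → δ ≤ δ₀ → ∀ z ∈ Icc (p + δ) (q - δ),
      min (c * δ) m₂ ≤ -(b₀ z + r * b₁ z) := by
    intro δ hδ hδδ₀ z hz
    rcases le_or_gt z (p + δ₀) with h1 | h1
    · have := hlp r (by simpa using hδ₀pos.le) z ⟨by linarith [hz.1], h1⟩
      have h2 : c * δ ≤ c * (z - p) := by
        have := hz.1
        nlinarith
      refine le_trans (min_le_left _ _) ?_
      simp only [sub_self, zero_mul] at this
      linarith
    rcases le_or_gt (q - δ₀) z with h2 | h2
    · have := hup r (by simpa using hδ₀pos.le) z ⟨h2, by linarith [hz.2]⟩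
      have h3 : c * δ ≤ c * (q - z) := by
        have := hz.2
        nlinarith
      refine le_trans (min_le_left _ _) ?_
      simp only [sub_self, zero_mul] at this
      linarith
    · exact le_trans (min_le_right _ _) (hmid z ⟨h1.le, h2.le⟩)
  -- continuity of the singular integrands on (p,q)
  have hsqrtpos : ∀ z ∈ Ioo p q, 0 < Real.sqrt (-(b₀ z + r * b₁ z)) := by
    intro z hz
    exact Real.sqrt_pos.2 (by linarith [hneg r hrmem z hz])
  have hGcont : ContinuousOn (fun z => b₁ z / Real.sqrt (-(b₀ z + r * b₁ z))) (Ioo p q) := by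
    refine ContinuousOn.div hb1c.continuousOn ?_ ?_
    · exact (Real.continuous_sqrt.comp (by fun_prop)).continuousOn
    · exact fun z hz => ne_of_gt (hsqrtpos z hz)
  have hUcont : ContinuousOn (fun z => (Real.sqrt (-(b₀ z + r * b₁ z)))⁻¹) (Ioo p q) := by
    refine ContinuousOn.inv₀ ((Real.continuous_sqrt.comp (by fun_prop)).continuousOn) ?_
    exact fun z hz => ne_of_gt (hsqrtpos z hz)
  -- edge machinery
  have hedgeR : ∀ K : ℝ, 0 ≤ K → ∀ g : ℝ → ℝ, ContinuousOn g (Ioo p q) →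
      (∀ z ∈ Ioo p q, |g z| ≤ K * (Real.sqrt (-(b₀ z + r * b₁ z)))⁻¹) →
      ∀ δ, 0 < δ → δ ≤ δ₀ → IntervalIntegrable g volume (q - δ) q ∧
        ∫ z in (q - δ)..q, g z ≤ K / Real.sqrt c * (2 * Real.sqrt δ) := by
    intro K hK g hgc hgb δ hδ hδδ₀
    have hsub : Ioo (q - δ) q ⊆ Ioo p q := fun z hz => ⟨by linarith [hz.1], hz.2⟩
    have hscpos : 0 < Real.sqrt c := Real.sqrt_pos.2 hc
    have hmain := dominated_interval (a := q - δ) (b := q)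
      (ψ := fun z => K / Real.sqrt c * (q - z) ^ (-(1/2) : ℝ)) (by linarith)
      ((invsqrt_integrable_right (q - δ) q).const_mul _) (hgc.mono hsub) ?_
    · refine ⟨hmain.1, le_trans hmain.2 ?_⟩
      rw [intervalIntegral.integral_const_mul, invsqrt_integral_right _ _ (by linarith)]
      have : q - (q - δ) = δ := by ring
      rw [this]
    · intro z hz
      have hzmem : z ∈ Ioo p q := hsub hz
      have ha : c * (q - z) ≤ -(b₀ z + r * b₁ z) := by
        have := hup r (by simpa using hδ₀pos.le) z ⟨by linarith [hz.1], hz.2.le⟩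
        simp only [sub_self, zero_mul] at this
        linarith
      have hqz : 0 < q - z := by linarith [hz.2]
      have hsle : Real.sqrt (c * (q - z)) ≤ Real.sqrt (-(b₀ z + r * b₁ z)) :=
        Real.sqrt_le_sqrt ha
      have hspos : 0 < Real.sqrt (c * (q - z)) := Real.sqrt_pos.2 (by positivity)
      calc |g z| ≤ K * (Real.sqrt (-(b₀ z + r * b₁ z)))⁻¹ := hgb z hzmem
        _ ≤ K * (Real.sqrt (c * (q - z)))⁻¹ :=
            mul_le_mul_of_nonneg_left (inv_anti₀ hspos hsle) hK
        _ = K / Real.sqrt c * (q - z) ^ (-(1/2) : ℝ) := by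
            rw [Real.sqrt_mul hc.le, ← inv_sqrt_rpow _ hqz.le, mul_inv]
            ring
  have hedgeL : ∀ K : ℝ, 0 ≤ K → ∀ g : ℝ → ℝ, ContinuousOn g (Ioo p q) →
      (∀ z ∈ Ioo p q, |g z| ≤ K * (Real.sqrt (-(b₀ z + r * b₁ z)))⁻¹) →
      ∀ δ, 0 < δ → δ ≤ δ₀ → IntervalIntegrable g volume p (p + δ) ∧
        ∫ z in p..(p + δ), g z ≤ K / Real.sqrt c * (2 * Real.sqrt δ) := by
    intro K hK g hgc hgb δ hδ hδδ₀
    have hsub : Ioo p (p + δ) ⊆ Ioo p q := fun z hz => ⟨hz.1, by linarith [hz.2]⟩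
    have hscpos : 0 < Real.sqrt c := Real.sqrt_pos.2 hc
    have hmain := dominated_interval (a := p) (b := p + δ)
      (ψ := fun z => K / Real.sqrt c * (z - p) ^ (-(1/2) : ℝ)) (by linarith)
      ((invsqrt_integrable_left p (p + δ)).const_mul _) (hgc.mono hsub) ?_
    · refine ⟨hmain.1, le_trans hmain.2 ?_⟩
      rw [intervalIntegral.integral_const_mul, invsqrt_integral_left _ _ (by linarith)]
      have : p + δ - p = δ := by ring
      rw [this]
    · intro z hz
      have hzmem : z ∈ Ioo p q := hsub hz
      have ha : c * (z - p) ≤ -(b₀ z + r * b₁ z) := by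
        have := hlp r (by simpa using hδ₀pos.le) z ⟨hz.1.le, by linarith [hz.2]⟩
        simp only [sub_self, zero_mul] at this
        linarith
      have hzp : 0 < z - p := by linarith [hz.1]
      have hsle : Real.sqrt (c * (z - p)) ≤ Real.sqrt (-(b₀ z + r * b₁ z)) :=
        Real.sqrt_le_sqrt ha
      have hspos : 0 < Real.sqrt (c * (z - p)) := Real.sqrt_pos.2 (by positivity)
      calc |g z| ≤ K * (Real.sqrt (-(b₀ z + r * b₁ z)))⁻¹ := hgb z hzmem
        _ ≤ K * (Real.sqrt (c * (z - p)))⁻¹ :=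
            mul_le_mul_of_nonneg_left (inv_anti₀ hspos hsle) hK
        _ = K / Real.sqrt c * (z - p) ^ (-(1/2) : ℝ) := by
            rw [Real.sqrt_mul hc.le, ← inv_sqrt_rpow _ hzp.le, mul_inv]
            ring
  -- pointwise bounds for the two singular integrands
  have hGb : ∀ z ∈ Ioo p q, |b₁ z / Real.sqrt (-(b₀ z + r * b₁ z))| ≤
      M * (Real.sqrt (-(b₀ z + r * b₁ z)))⁻¹ := by
    intro z hz
    rw [abs_div, abs_of_nonneg (Real.sqrt_nonneg _), div_eq_mul_inv]
    exact mul_le_mul_of_nonneg_right (hMb z (hIpq hz)) (inv_nonneg.2 (Real.sqrt_nonneg _))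
  have hUb : ∀ z ∈ Ioo p q, |(Real.sqrt (-(b₀ z + r * b₁ z)))⁻¹| ≤
      (1:ℝ) * (Real.sqrt (-(b₀ z + r * b₁ z)))⁻¹ := by
    intro z hz
    rw [abs_of_nonneg (inv_nonneg.2 (Real.sqrt_nonneg _)), one_mul]
  -- integrability over the middle
  have hmidsub : Icc (p + δ₀) (q - δ₀) ⊆ Ioo p q := fun z hz =>
    ⟨by linarith [hz.1], by linarith [hz.2]⟩
  have IGmid : IntervalIntegrable (fun z => b₁ z / Real.sqrt (-(b₀ z + r * b₁ z)))
      volume (p + δ₀) (q - δ₀) := by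
    apply ContinuousOn.intervalIntegrable
    rw [uIcc_of_le hpmid]
    exact hGcont.mono hmidsub
  have IUmid : IntervalIntegrable (fun z => (Real.sqrt (-(b₀ z + r * b₁ z)))⁻¹)
      volume (p + δ₀) (q - δ₀) := by
    apply ContinuousOn.intervalIntegrable
    rw [uIcc_of_le hpmid]
    exact hUcont.mono hmidsub
  have IG : IntervalIntegrable (fun z => b₁ z / Real.sqrt (-(b₀ z + r * b₁ z))) volume p q := by
    have h1 := (hedgeL M hMpos.le _ hGcont hGb δ₀ hδ₀pos le_rfl).1
    have h2 := (hedgeR M hMpos.le _ hGcont hGb δ₀ hδ₀pos le_rfl).1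
    exact (h1.trans IGmid).trans h2
  have IU : IntervalIntegrable (fun z => (Real.sqrt (-(b₀ z + r * b₁ z)))⁻¹) volume p q := by
    have h1 := (hedgeL 1 one_pos.le _ hUcont hUb δ₀ hδ₀pos le_rfl).1
    have h2 := (hedgeR 1 one_pos.le _ hUcont hUb δ₀ hδ₀pos le_rfl).1
    exact (h1.trans IUmid).trans h2
  -- total bound CT for the inverse square root integral
  set CT : ℝ := 1 / Real.sqrt c * (2 * Real.sqrt δ₀) * 2 + (q - p) * (Real.sqrt m₂)⁻¹
    with hCTdef
  have hCTbound : ∫ z in p..q, (Real.sqrt (-(b₀ z + r * b₁ z)))⁻¹ ≤ CT := by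
    have h1 := hedgeL 1 one_pos.le _ hUcont hUb δ₀ hδ₀pos le_rfl
    have h2 := hedgeR 1 one_pos.le _ hUcont hUb δ₀ hδ₀pos le_rfl
    have hmidle : ∫ z in (p + δ₀)..(q - δ₀), (Real.sqrt (-(b₀ z + r * b₁ z)))⁻¹ ≤
        (q - p) * (Real.sqrt m₂)⁻¹ := by
      have hb : ∀ z ∈ Icc (p + δ₀) (q - δ₀),
          (Real.sqrt (-(b₀ z + r * b₁ z)))⁻¹ ≤ (Real.sqrt m₂)⁻¹ := by
        intro z hz
        exact inv_anti₀ (Real.sqrt_pos.2 hm₂pos) (Real.sqrt_le_sqrt (hmid z hz))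
      calc ∫ z in (p + δ₀)..(q - δ₀), (Real.sqrt (-(b₀ z + r * b₁ z)))⁻¹
          ≤ ∫ _z in (p + δ₀)..(q - δ₀), (Real.sqrt m₂)⁻¹ :=
            intervalIntegral.integral_mono_on hpmid IUmid intervalIntegrable_const hb
        _ = (q - δ₀ - (p + δ₀)) * (Real.sqrt m₂)⁻¹ := by
            rw [intervalIntegral.integral_const, smul_eq_mul]
        _ ≤ (q - p) * (Real.sqrt m₂)⁻¹ := by
            apply mul_le_mul_of_nonneg_right (by linarith)
              (inv_nonneg.2 (Real.sqrt_nonneg _))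
    have hsplit : ∫ z in p..q, (Real.sqrt (-(b₀ z + r * b₁ z)))⁻¹ =
        (∫ z in p..(p + δ₀), (Real.sqrt (-(b₀ z + r * b₁ z)))⁻¹) +
        (∫ z in (p + δ₀)..(q - δ₀), (Real.sqrt (-(b₀ z + r * b₁ z)))⁻¹) +
        (∫ z in (q - δ₀)..q, (Real.sqrt (-(b₀ z + r * b₁ z)))⁻¹) := by
      rw [intervalIntegral.integral_add_adjacent_intervals h1.1 IUmid,
        intervalIntegral.integral_add_adjacent_intervals (h1.1.trans IUmid) h2.1]
    rw [hsplit, hCTdef]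
    have e1 := h1.2
    have e2 := h2.2
    rw [div_eq_mul_inv] at e1 e2 ⊢
    linarith
  have hCTpos : 0 < CT := by
    rw [hCTdef]
    have h1 : 0 < Real.sqrt δ₀ := Real.sqrt_pos.2 hδ₀pos
    have h2 : 0 < Real.sqrt c := Real.sqrt_pos.2 hc
    have h3 : 0 < Real.sqrt m₂ := Real.sqrt_pos.2 hm₂pos
    have h4 : 0 < 1 / Real.sqrt c * (2 * Real.sqrt δ₀) * 2 := by positivity
    have h5 : 0 ≤ (q - p) * (Real.sqrt m₂)⁻¹ :=
      mul_nonneg (by linarith) (inv_nonneg.2 (Real.sqrt_nonneg _))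
    linarith
  have hIUsub : ∀ δ, 0 < δ → δ ≤ δ₀ →
      ∫ z in (p + δ)..(q - δ), (Real.sqrt (-(b₀ z + r * b₁ z)))⁻¹ ≤ CT := by
    intro δ hδ hδδ₀
    refine le_trans (intervalIntegral.integral_mono_interval (by linarith)
      (by linarith) (by linarith) ?_ IU) hCTbound
    filter_upwards with z
    exact inv_nonneg.2 (Real.sqrt_nonneg _)
  -- positivity of the period integral
  have hTpos : 0 < ∫ z in p..q, b₁ z / Real.sqrt (-(b₀ z + r * b₁ z)) := by
    refine intervalIntegral.intervalIntegral_pos_of_pos_on IG (fun z hz => ?_) hpq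
    exact div_pos (lt_of_lt_of_le hε₀ (hb₁lb z (hIpq hz))) (hsqrtpos z hz)
  -- the action integral with fixed endpoints
  set η : ℝ → ℝ := fun s => ∫ z in A..B, Real.sqrt (-(b₀ z + s * b₁ z)) with hηdef
  have hgscont : ∀ s : ℝ, Continuous (fun z => Real.sqrt (-(b₀ z + s * b₁ z))) :=
    fun s => Real.continuous_sqrt.comp (by fun_prop)
  have hzero_int : ∀ (s a b : ℝ), a ≤ b → (∀ z ∈ Icc a b, 0 ≤ b₀ z + s * b₁ z) →
      (∫ z in a..b, Real.sqrt (-(b₀ z + s * b₁ z))) = 0 := by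
    intro s a b hab hnn
    have : EqOn (fun z => Real.sqrt (-(b₀ z + s * b₁ z))) (fun _ => (0:ℝ)) (uIcc a b) := by
      intro z hzz
      rw [uIcc_of_le hab] at hzz
      exact Real.sqrt_eq_zero'.2 (by linarith [hnn z hzz])
    rw [intervalIntegral.integral_congr this]
    simp
  have heq : ∀ s ∈ Ioo r₁ r₂,
      (∫ z in (zm s)..(zp s), Real.sqrt (-(b₀ z + s * b₁ z))) = η s := by
    intro s hs
    obtain ⟨k1, k2, k3⟩ := hz s hs
    obtain ⟨kz1, kz2⟩ := hzero s hs
    have iA : IntervalIntegrable (fun z => Real.sqrt (-(b₀ z + s * b₁ z))) volume A (zm s) :=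
      (hgscont s).intervalIntegrable _ _
    have iM : IntervalIntegrable (fun z => Real.sqrt (-(b₀ z + s * b₁ z))) volume (zm s) (zp s) :=
      (hgscont s).intervalIntegrable _ _
    have iB : IntervalIntegrable (fun z => Real.sqrt (-(b₀ z + s * b₁ z))) volume (zp s) B :=
      (hgscont s).intervalIntegrable _ _
    have e1 : (∫ z in A..(zm s), Real.sqrt (-(b₀ z + s * b₁ z))) = 0 := by
      refine hzero_int s A (zm s) k1.le (fun z hzz => ?_)
      rcases eq_or_lt_of_le hzz.2 with hzeq | hzlt
      · rw [hzeq, kz1]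
      · refine (hpos s hs z ⟨hzz.1, by linarith⟩ ?_).le
        intro hmem
        linarith [hmem.1]
    have e2 : (∫ z in (zp s)..B, Real.sqrt (-(b₀ z + s * b₁ z))) = 0 := by
      refine hzero_int s (zp s) B k3.le (fun z hzz => ?_)
      rcases eq_or_lt_of_le hzz.1 with hzeq | hzlt
      · rw [← hzeq, kz2]
      · refine (hpos s hs z ⟨by linarith, hzz.2⟩ ?_).le
        intro hmem
        linarith [hmem.2]
    have hsum1 := intervalIntegral.integral_add_adjacent_intervals iA iM
    have hsum2 := intervalIntegral.integral_add_adjacent_intervals (iA.trans iM) iB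
    rw [hηdef]
    simp only
    linarith [hsum1, hsum2, e1, e2]
  -- support control at a shifted parameter
  have hsupp : ∀ s δ : ℝ, |s - r| ≤ δ₀ → 0 < δ → δ ≤ δ₀ → M * |s - r| ≤ c * δ →
      M * |s - r| ≤ m₁ →
      (∫ z in A..(p - δ), Real.sqrt (-(b₀ z + s * b₁ z))) = 0 ∧
      (∫ z in (q + δ)..B, Real.sqrt (-(b₀ z + s * b₁ z))) = 0 := by
    intro s δ hsδ₀ hδ hδδ₀ hMcδ hMm₁
    have habs : ∀ z ∈ Icc A B, |(s - r) * b₁ z| ≤ M * |s - r| := by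
      intro z hzz
      rw [abs_mul, mul_comm]
      exact mul_le_mul_of_nonneg_right (hMb z hzz) (abs_nonneg _)
    constructor
    · refine hzero_int s A (p - δ) (by linarith) (fun z hzz => ?_)
      have hzAB : z ∈ Icc A B := ⟨hzz.1, by linarith [hzz.2]⟩
      rcases le_or_gt z (p - δ₀) with hfar | hnear
      · have h1 := hfar₁ z ⟨hzz.1, hfar⟩
        have h2 := habs z hzAB
        have : b₀ z + s * b₁ z = (b₀ z + r * b₁ z) + (s - r) * b₁ z := by ring
        rw [this]
        have := neg_abs_le ((s - r) * b₁ z)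
        linarith
      · have h1 := hlp' s hsδ₀ z ⟨hnear.le, by linarith [hzz.2]⟩
        have h2 := habs z hzAB
        have h3 : c * δ ≤ c * (p - z) := by nlinarith [hzz.2]
        have := neg_abs_le ((s - r) * b₁ p)
        have h4 := habs p (hABr ⟨le_refl p, hpq.le⟩)
        linarith
    · refine hzero_int s (q + δ) B (by linarith) (fun z hzz => ?_)
      have hzAB : z ∈ Icc A B := ⟨by linarith [hzz.1], hzz.2⟩
      rcases le_or_gt (q + δ₀) z with hfar | hnear
      · have h1 := hfar₂ z ⟨hfar, hzz.2⟩
        have h2 := habs z hzAB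
        have : b₀ z + s * b₁ z = (b₀ z + r * b₁ z) + (s - r) * b₁ z := by ring
        rw [this]
        have := neg_abs_le ((s - r) * b₁ z)
        linarith
      · have h1 := hup' s hsδ₀ z ⟨by linarith [hzz.1], hnear.le⟩
        have h3 : c * δ ≤ c * (z - q) := by nlinarith [hzz.1]
        have := neg_abs_le ((s - r) * b₁ q)
        have h4 := habs q (hABr ⟨hpq.le, le_refl q⟩)
        linarith
  refine ⟨?_, hTpos⟩
  have hev : η =ᶠ[nhds r]
      (fun s => ∫ z in (zm s)..(zp s), Real.sqrt (-(b₀ z + s * b₁ z))) := by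
    filter_upwards [Ioo_mem_nhds hrmem.1 hrmem.2] with s hs
    exact (heq s hs).symm
  rw [← Filter.EventuallyEq.hasDerivAt_iff hev]
  set D : ℝ := -(1 / 2) * ∫ z in p..q, b₁ z / Real.sqrt (-(b₀ z + r * b₁ z)) with hDdef
  rw [hasDerivAt_iff_tendsto_slope]
  set Φ : ℝ → ℝ := fun s => 4 * Real.sqrt M * |s - r| ^ ((1:ℝ)/6)
    + (2 * M / Real.sqrt c) * |s - r| ^ ((1:ℝ)/3)
    + (M ^ 2 * CT / c) * |s - r| ^ ((1:ℝ)/3)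
    + (M ^ 2 * CT / m₂) * |s - r| with hΦdef
  have habs0 : Tendsto (fun s : ℝ => |s - r|) (nhdsWithin r {r}ᶜ) (nhds 0) := by
    have h1 : Tendsto (fun s : ℝ => |s - r|) (nhds r) (nhds |r - r|) :=
      (continuous_abs.comp (continuous_id.sub continuous_const)).tendsto r
    simpa using h1.mono_left nhdsWithin_le_nhds
  have hpow : ∀ e : ℝ, 0 < e →
      Tendsto (fun s : ℝ => |s - r| ^ e) (nhdsWithin r {r}ᶜ) (nhds 0) := by
    intro e he
    have h2 : Tendsto (fun x : ℝ => x ^ e) (nhds 0) (nhds 0) := by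
      have := (Real.continuousAt_rpow_const 0 e (Or.inr he.le)).tendsto
      simpa [Real.zero_rpow he.ne'] using this
    exact h2.comp habs0
  have hΦt : Tendsto Φ (nhdsWithin r {r}ᶜ) (nhds 0) := by
    rw [hΦdef]
    have h1 := (hpow (1/6) (by norm_num)).const_mul (4 * Real.sqrt M)
    have h2 := (hpow (1/3) (by norm_num)).const_mul (2 * M / Real.sqrt c)
    have h3 := (hpow (1/3) (by norm_num)).const_mul (M ^ 2 * CT / c)
    have h4 := habs0.const_mul (M ^ 2 * CT / m₂)
    have := ((h1.add h2).add h3).add h4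
    simpa using this
  suffices hbound : ∀ᶠ s in nhdsWithin r {r}ᶜ, |slope η r s - D| ≤ Φ s by
    have h0 : Tendsto (fun s => slope η r s - D) (nhdsWithin r {r}ᶜ) (nhds 0) :=
      squeeze_zero_norm' (by simpa [Real.norm_eq_abs] using hbound) hΦt
    have h1 := h0.add (tendsto_const_nhds (x := D) (f := nhdsWithin r {r}ᶜ))
    simpa using h1
  have ev1 := (hpow ((2:ℝ)/3) (by norm_num)).eventually_lt_const hδ₀pos
  have ev2 := (hpow ((1:ℝ)/3) (by norm_num)).eventually_lt_const
    (show (0:ℝ) < c / (2 * M) by positivity)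
  have ev3 := habs0.eventually_lt_const (show (0:ℝ) < m₂ / (2 * M) by positivity)
  have ev4 := habs0.eventually_lt_const (show (0:ℝ) < m₁ / M by positivity)
  have ev5 := habs0.eventually_lt_const hδ₀pos
  filter_upwards [ev1, ev2, ev3, ev4, ev5, self_mem_nhdsWithin] with s hev1 hev2 hev3 hev4
    hev5 hevne
  have hne : s ≠ r := hevne
  have hh : 0 < |s - r| := abs_pos.2 (sub_ne_zero.2 hne)
  set h : ℝ := |s - r| with hhdef
  set δ : ℝ := h ^ ((2:ℝ)/3) with hδdef
  have hδpos : 0 < δ := Real.rpow_pos_of_pos hh _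
  have hδδ₀ : δ ≤ δ₀ := hev1.le
  have hid13 : h ^ ((1:ℝ)/3) * δ = h := by
    rw [hδdef, ← Real.rpow_add hh]
    norm_num
  have c2Mδ : 2 * M * h ≤ c * δ := by
    have h1 : 2 * M * h ^ ((1:ℝ)/3) ≤ c := by
      rw [lt_div_iff₀ (by positivity)] at hev2
      linarith
    have h2 := mul_le_mul_of_nonneg_right h1 hδpos.le
    calc 2 * M * h = 2 * M * (h ^ ((1:ℝ)/3) * δ) := by rw [hid13]
      _ = 2 * M * h ^ ((1:ℝ)/3) * δ := by ring
      _ ≤ c * δ := h2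
  have c2Mm₂ : 2 * M * h ≤ m₂ := by
    rw [lt_div_iff₀ (by positivity)] at hev3
    linarith
  have cMm₁ : M * h ≤ m₁ := by
    rw [lt_div_iff₀ hMpos] at hev4
    linarith
  have hMcδ : M * h ≤ c * δ := by nlinarith [hMpos, hh]
  have hsδ₀ : h ≤ δ₀ := hev5.le
  have hsIoo : s ∈ Ioo r₁ r₂ := by
    obtain ⟨hl, hr'⟩ := abs_lt.1 hev5
    constructor <;> linarith
  -- order facts
  have hAa : A ≤ p - δ := by linarith
  have haB : q + δ ≤ B := by linarith
  have ha23 : p + δ ≤ q - δ := by linarith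
  -- support
  obtain ⟨Zs1, Zs2⟩ := hsupp s δ hsδ₀ hδpos hδδ₀ hMcδ cMm₁
  obtain ⟨Zr1, Zr2⟩ := hsupp r δ (by simpa using hδ₀pos.le) hδpos hδδ₀
    (by simpa using (mul_nonneg hc.le hδpos.le)) (by simpa using hm₁pos.le)
  -- integrability of the continuous integrands
  have is0 : ∀ a b : ℝ, IntervalIntegrable (fun z => Real.sqrt (-(b₀ z + s * b₁ z))) volume a b :=
    fun a b => (hgscont s).intervalIntegrable a b
  have ir0 : ∀ a b : ℝ, IntervalIntegrable (fun z => Real.sqrt (-(b₀ z + r * b₁ z))) volume a b :=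
    fun a b => (hgscont r).intervalIntegrable a b
  -- decomposition of η s
  have hdecomp : ∀ t : ℝ, (∫ z in A..(p - δ), Real.sqrt (-(b₀ z + t * b₁ z))) = 0 →
      (∫ z in (q + δ)..B, Real.sqrt (-(b₀ z + t * b₁ z))) = 0 →
      η t = (∫ z in (p - δ)..(p + δ), Real.sqrt (-(b₀ z + t * b₁ z)))
        + (∫ z in (p + δ)..(q - δ), Real.sqrt (-(b₀ z + t * b₁ z)))
        + (∫ z in (q - δ)..(q + δ), Real.sqrt (-(b₀ z + t * b₁ z))) := by
    intro t Z1 Z2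
    have i0 : ∀ a b : ℝ, IntervalIntegrable (fun z => Real.sqrt (-(b₀ z + t * b₁ z))) volume a b :=
      fun a b => (hgscont t).intervalIntegrable a b
    have s1 := intervalIntegral.integral_add_adjacent_intervals (i0 A (p - δ)) (i0 (p - δ) (p + δ))
    have s2 := intervalIntegral.integral_add_adjacent_intervals ((i0 A (p - δ)).trans
      (i0 (p - δ) (p + δ))) (i0 (p + δ) (q - δ))
    have s3 := intervalIntegral.integral_add_adjacent_intervals (((i0 A (p - δ)).trans
      (i0 (p - δ) (p + δ))).trans (i0 (p + δ) (q - δ))) (i0 (q - δ) (q + δ))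
    have s4 := intervalIntegral.integral_add_adjacent_intervals ((((i0 A (p - δ)).trans
      (i0 (p - δ) (p + δ))).trans (i0 (p + δ) (q - δ))).trans (i0 (q - δ) (q + δ)))
      (i0 (q + δ) B)
    rw [hηdef]
    simp only
    linarith [s1, s2, s3, s4, Z1, Z2]
  have hηs := hdecomp s Zs1 Zs2
  have hηr := hdecomp r Zr1 Zr2
  -- decomposition of the period integral
  have hTl := hedgeL M hMpos.le _ hGcont hGb δ hδpos hδδ₀
  have hTr := hedgeR M hMpos.le _ hGcont hGb δ hδpos hδδ₀
  have ITm : IntervalIntegrable (fun z => b₁ z / Real.sqrt (-(b₀ z + r * b₁ z)))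
      volume (p + δ) (q - δ) := by
    refine IG.mono_set ?_
    rw [uIcc_of_le ha23, uIcc_of_le hpq.le]
    exact Icc_subset_Icc (by linarith) (by linarith)
  have hTsplit : (∫ z in p..q, b₁ z / Real.sqrt (-(b₀ z + r * b₁ z)))
      = (∫ z in p..(p + δ), b₁ z / Real.sqrt (-(b₀ z + r * b₁ z)))
      + (∫ z in (p + δ)..(q - δ), b₁ z / Real.sqrt (-(b₀ z + r * b₁ z)))
      + (∫ z in (q - δ)..q, b₁ z / Real.sqrt (-(b₀ z + r * b₁ z))) := by
    have s1 := intervalIntegral.integral_add_adjacent_intervals hTl.1 ITm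
    have s2 := intervalIntegral.integral_add_adjacent_intervals (hTl.1.trans ITm) hTr.1
    linarith [s1, s2]
  have hTlnn : 0 ≤ ∫ z in p..(p + δ), b₁ z / Real.sqrt (-(b₀ z + r * b₁ z)) := by
    refine intervalIntegral.integral_nonneg (by linarith) (fun z hzz => ?_)
    have : z ∈ Icc A B := ⟨by linarith [hzz.1], by linarith [hzz.2]⟩
    exact div_nonneg (by linarith [hb₁lb z this]) (Real.sqrt_nonneg _)
  have hTrnn : 0 ≤ ∫ z in (q - δ)..q, b₁ z / Real.sqrt (-(b₀ z + r * b₁ z)) := by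
    refine intervalIntegral.integral_nonneg (by linarith) (fun z hzz => ?_)
    have : z ∈ Icc A B := ⟨by linarith [hzz.1], by linarith [hzz.2]⟩
    exact div_nonneg (by linarith [hb₁lb z this]) (Real.sqrt_nonneg _)
  -- edge difference bounds
  have hptd : ∀ z ∈ Icc A B, |Real.sqrt (-(b₀ z + s * b₁ z)) - Real.sqrt (-(b₀ z + r * b₁ z))|
      ≤ Real.sqrt (M * h) := by
    intro z hzz
    refine le_trans (abs_sqrt_sub_sqrt _ _) (Real.sqrt_le_sqrt ?_)
    have : -(b₀ z + s * b₁ z) - -(b₀ z + r * b₁ z) = -((s - r) * b₁ z) := by ring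
    rw [this, abs_neg, abs_mul, ← hhdef]
    calc |s - r| * |b₁ z| = |b₁ z| * h := by rw [mul_comm]
      _ ≤ M * h := mul_le_mul_of_nonneg_right (hMb z hzz) hh.le
  have hedgediff : ∀ a b : ℝ, A ≤ a → a ≤ b → b ≤ B → b - a = 2 * δ →
      |(∫ z in a..b, Real.sqrt (-(b₀ z + s * b₁ z)))
        - ∫ z in a..b, Real.sqrt (-(b₀ z + r * b₁ z))| ≤ Real.sqrt (M * h) * (2 * δ) := by
    intro a b hA1 hab hB1 hlen
    rw [← intervalIntegral.integral_sub (is0 a b) (ir0 a b)]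
    have := intervalIntegral.norm_integral_le_of_norm_le_const (C := Real.sqrt (M * h))
      (f := fun z => Real.sqrt (-(b₀ z + s * b₁ z)) - Real.sqrt (-(b₀ z + r * b₁ z)))
      (a := a) (b := b) ?_
    · rw [Real.norm_eq_abs] at this
      refine le_trans this ?_
      rw [abs_of_nonneg (by linarith)]
      rw [hlen]
    · intro z hzz
      rw [uIoc_of_le hab] at hzz
      exact hptd z ⟨by linarith [hzz.1.le], by linarith [hzz.2]⟩
  have hB1 := hedgediff (p - δ) (p + δ) hAa (by linarith) (by linarith) (by ring)
  have hB3 := hedgediff (q - δ) (q + δ) (by linarith) (by linarith) haB (by ring)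
  -- core bound
  set μδ : ℝ := min (c * δ) m₂ with hμdef
  have hμpos : 0 < μδ := lt_min (by positivity) hm₂pos
  have hcore : |∫ z in (p + δ)..(q - δ),
      (Real.sqrt (-(b₀ z + s * b₁ z)) - Real.sqrt (-(b₀ z + r * b₁ z))
        + ((s - r) / 2) * (b₁ z / Real.sqrt (-(b₀ z + r * b₁ z))))|
      ≤ (M * h) ^ 2 / μδ * CT := by
    have hwint : IntervalIntegrable (fun z =>
        Real.sqrt (-(b₀ z + s * b₁ z)) - Real.sqrt (-(b₀ z + r * b₁ z))
        + ((s - r) / 2) * (b₁ z / Real.sqrt (-(b₀ z + r * b₁ z)))) volume (p + δ) (q - δ) :=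
      ((is0 _ _).sub (ir0 _ _)).add (ITm.const_mul _)
    have hψint : IntervalIntegrable (fun z =>
        (M * h) ^ 2 / μδ * (Real.sqrt (-(b₀ z + r * b₁ z)))⁻¹) volume (p + δ) (q - δ) := by
      refine IntervalIntegrable.const_mul ?_ _
      refine IU.mono_set ?_
      rw [uIcc_of_le ha23, uIcc_of_le hpq.le]
      exact Icc_subset_Icc (by linarith) (by linarith)
    have hwbd : ∀ z ∈ Icc (p + δ) (q - δ),
        |Real.sqrt (-(b₀ z + s * b₁ z)) - Real.sqrt (-(b₀ z + r * b₁ z))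
          + ((s - r) / 2) * (b₁ z / Real.sqrt (-(b₀ z + r * b₁ z)))|
        ≤ (M * h) ^ 2 / μδ * (Real.sqrt (-(b₀ z + r * b₁ z)))⁻¹ := by
      intro z hzz
      have hzAB : z ∈ Icc A B := ⟨by linarith [hzz.1], by linarith [hzz.2]⟩
      have hμa : μδ ≤ -(b₀ z + r * b₁ z) := hcore_lb δ hδpos hδδ₀ z hzz
      have hapos : 0 < -(b₀ z + r * b₁ z) := lt_of_lt_of_le hμpos hμa
      have ht : |(s - r) * b₁ z| ≤ M * h := by
        rw [abs_mul, ← hhdef, mul_comm]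
        exact mul_le_mul_of_nonneg_right (hMb z hzAB) hh.le
      have hta : |(s - r) * b₁ z| ≤ (-(b₀ z + r * b₁ z)) / 2 := by
        have : M * h ≤ μδ / 2 := by
          rw [hμdef, le_div_iff₀ (by norm_num : (0:ℝ) < 2)]
          rw [le_min_iff]
          constructor <;> linarith
        linarith
      have htay := sqrt_taylor (-(b₀ z + r * b₁ z)) ((s - r) * b₁ z) hapos hta
      have hwz : Real.sqrt (-(b₀ z + s * b₁ z)) - Real.sqrt (-(b₀ z + r * b₁ z))
          + ((s - r) / 2) * (b₁ z / Real.sqrt (-(b₀ z + r * b₁ z)))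
          = Real.sqrt ((-(b₀ z + r * b₁ z)) - (s - r) * b₁ z)
            - Real.sqrt (-(b₀ z + r * b₁ z))
            + ((s - r) * b₁ z) / (2 * Real.sqrt (-(b₀ z + r * b₁ z))) := by
        rw [show (-(b₀ z + r * b₁ z)) - (s - r) * b₁ z = -(b₀ z + s * b₁ z) by ring]
        ring
      rw [hwz]
      refine le_trans htay ?_
      have h5 : ((s - r) * b₁ z) ^ 2 ≤ (M * h) ^ 2 := by
        rw [← sq_abs]
        exact pow_le_pow_left₀ (abs_nonneg _) ht 2
      have hsq : 0 < Real.sqrt (-(b₀ z + r * b₁ z)) := Real.sqrt_pos.2 hapos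
      calc ((s - r) * b₁ z) ^ 2 / (-(b₀ z + r * b₁ z) * Real.sqrt (-(b₀ z + r * b₁ z)))
          ≤ (M * h) ^ 2 / (-(b₀ z + r * b₁ z) * Real.sqrt (-(b₀ z + r * b₁ z))) := by
            gcongr
        _ = (M * h) ^ 2 / (-(b₀ z + r * b₁ z)) * (Real.sqrt (-(b₀ z + r * b₁ z)))⁻¹ := by
            rw [← div_div, div_eq_mul_inv]
        _ ≤ (M * h) ^ 2 / μδ * (Real.sqrt (-(b₀ z + r * b₁ z)))⁻¹ := by
            gcongr <;> first | positivity | exact hμa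
    calc |∫ z in (p + δ)..(q - δ),
        (Real.sqrt (-(b₀ z + s * b₁ z)) - Real.sqrt (-(b₀ z + r * b₁ z))
          + ((s - r) / 2) * (b₁ z / Real.sqrt (-(b₀ z + r * b₁ z))))|
        ≤ ∫ z in (p + δ)..(q - δ), |Real.sqrt (-(b₀ z + s * b₁ z))
            - Real.sqrt (-(b₀ z + r * b₁ z))
            + ((s - r) / 2) * (b₁ z / Real.sqrt (-(b₀ z + r * b₁ z)))| :=
          intervalIntegral.abs_integral_le_integral_abs ha23
      _ ≤ ∫ z in (p + δ)..(q - δ), (M * h) ^ 2 / μδ * (Real.sqrt (-(b₀ z + r * b₁ z)))⁻¹ := by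
          refine intervalIntegral.integral_mono_on ha23 ?_ hψint (fun z hzz => hwbd z hzz)
          exact hwint.abs
      _ = (M * h) ^ 2 / μδ * ∫ z in (p + δ)..(q - δ), (Real.sqrt (-(b₀ z + r * b₁ z)))⁻¹ := by
          rw [intervalIntegral.integral_const_mul]
      _ ≤ (M * h) ^ 2 / μδ * CT := by
          refine mul_le_mul_of_nonneg_left (hIUsub δ hδpos hδδ₀) (by positivity)
  -- combine the integral of the core integrand
  have hcoreid : (∫ z in (p + δ)..(q - δ),
      (Real.sqrt (-(b₀ z + s * b₁ z)) - Real.sqrt (-(b₀ z + r * b₁ z))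
        + ((s - r) / 2) * (b₁ z / Real.sqrt (-(b₀ z + r * b₁ z)))))
      = (∫ z in (p + δ)..(q - δ), Real.sqrt (-(b₀ z + s * b₁ z)))
        - (∫ z in (p + δ)..(q - δ), Real.sqrt (-(b₀ z + r * b₁ z)))
        + (s - r) / 2 * ∫ z in (p + δ)..(q - δ), b₁ z / Real.sqrt (-(b₀ z + r * b₁ z)) := by
    rw [intervalIntegral.integral_add ((is0 _ _).sub (ir0 _ _)) (ITm.const_mul _),
      intervalIntegral.integral_sub (is0 _ _) (ir0 _ _),
      intervalIntegral.integral_const_mul]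
  -- numerator bound
  have hNb : |η s - η r - (s - r) * D| ≤ h * Φ s := by
    set S1 := ∫ z in (p - δ)..(p + δ), Real.sqrt (-(b₀ z + s * b₁ z)) with hS1
    set R1 := ∫ z in (p - δ)..(p + δ), Real.sqrt (-(b₀ z + r * b₁ z)) with hR1
    set S2 := ∫ z in (p + δ)..(q - δ), Real.sqrt (-(b₀ z + s * b₁ z)) with hS2
    set R2 := ∫ z in (p + δ)..(q - δ), Real.sqrt (-(b₀ z + r * b₁ z)) with hR2
    set S3 := ∫ z in (q - δ)..(q + δ), Real.sqrt (-(b₀ z + s * b₁ z)) with hS3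
    set R3 := ∫ z in (q - δ)..(q + δ), Real.sqrt (-(b₀ z + r * b₁ z)) with hR3
    set TL := ∫ z in p..(p + δ), b₁ z / Real.sqrt (-(b₀ z + r * b₁ z)) with hTL
    set TM := ∫ z in (p + δ)..(q - δ), b₁ z / Real.sqrt (-(b₀ z + r * b₁ z)) with hTM
    set TR := ∫ z in (q - δ)..q, b₁ z / Real.sqrt (-(b₀ z + r * b₁ z)) with hTR
    set W := ∫ z in (p + δ)..(q - δ),
      (Real.sqrt (-(b₀ z + s * b₁ z)) - Real.sqrt (-(b₀ z + r * b₁ z))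
        + ((s - r) / 2) * (b₁ z / Real.sqrt (-(b₀ z + r * b₁ z)))) with hW
    have hNid : η s - η r - (s - r) * D
        = (S1 - R1 + (s - r) / 2 * TL) + W + (S3 - R3 + (s - r) / 2 * TR) := by
      rw [hηs, hηr, hDdef, hTsplit, hcoreid]
      ring
    have hTLb : |(s - r) / 2 * TL| ≤ h / 2 * (M / Real.sqrt c * (2 * Real.sqrt δ)) := by
      rw [abs_mul, abs_div, abs_two, abs_of_nonneg hTlnn, ← hhdef]
      exact mul_le_mul (le_refl _) hTl.2 hTlnn (by positivity)
    have hTRb : |(s - r) / 2 * TR| ≤ h / 2 * (M / Real.sqrt c * (2 * Real.sqrt δ)) := by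
      rw [abs_mul, abs_div, abs_two, abs_of_nonneg hTrnn, ← hhdef]
      exact mul_le_mul (le_refl _) hTr.2 hTrnn (by positivity)
    have hCT0 : 0 ≤ CT := hCTpos.le
    have e1 : Real.sqrt (M * h) = Real.sqrt M * h ^ ((1:ℝ)/2) := by
      rw [Real.sqrt_mul hMpos.le, Real.sqrt_eq_rpow h]
    have e3 : Real.sqrt δ = h ^ ((1:ℝ)/3) := by
      rw [hδdef, Real.sqrt_eq_rpow, ← Real.rpow_mul hh.le]
      norm_num
    have e4 : δ * h ^ ((1:ℝ)/2) = h * h ^ ((1:ℝ)/6) := by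
      rw [hδdef, ← Real.rpow_add hh, show (2:ℝ)/3 + 1/2 = 1 + 1/6 by norm_num,
        Real.rpow_add hh, Real.rpow_one]
    have f1 : h * h ^ ((1:ℝ)/3) * δ = h ^ 2 := by
      rw [hδdef, mul_assoc, ← Real.rpow_add hh, show (1:ℝ)/3 + 2/3 = 1 by norm_num,
        Real.rpow_one]
      ring
    have e5 : (M * h) ^ 2 / μδ * CT
        ≤ h * (M ^ 2 * CT / c * h ^ ((1:ℝ)/3)) + h * (M ^ 2 * CT / m₂ * h) := by
      have nn1 : 0 ≤ h * (M ^ 2 * CT / c * h ^ ((1:ℝ)/3)) :=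
        mul_nonneg hh.le (mul_nonneg (div_nonneg (mul_nonneg (pow_nonneg hMpos.le 2) hCT0)
          hc.le) (Real.rpow_nonneg hh.le _))
      have nn2 : 0 ≤ h * (M ^ 2 * CT / m₂ * h) :=
        mul_nonneg hh.le (mul_nonneg (div_nonneg (mul_nonneg (pow_nonneg hMpos.le 2) hCT0)
          hm₂pos.le) hh.le)
      rcases le_total (c * δ) m₂ with hcase | hcase
      · have hmin : μδ = c * δ := min_eq_left hcase
        have g1 : h ^ 2 / δ = h * h ^ ((1:ℝ)/3) := by
          rw [eq_comm, eq_div_iff hδpos.ne']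
          exact f1
        have hterm : (M * h) ^ 2 / (c * δ) * CT = h * (M ^ 2 * CT / c * h ^ ((1:ℝ)/3)) := by
          have expand2 : h * (M ^ 2 * CT / c * h ^ ((1:ℝ)/3))
              = M ^ 2 * CT / c * (h * h ^ ((1:ℝ)/3)) := by ring
          rw [expand2, ← g1]
          have hcne : c ≠ 0 := hc.ne'
          have hδne : δ ≠ 0 := hδpos.ne'
          field_simp
        rw [hmin, hterm]
        linarith
      · have hmin : μδ = m₂ := min_eq_right hcase
        have hterm : (M * h) ^ 2 / m₂ * CT = h * (M ^ 2 * CT / m₂ * h) := by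
          field_simp
        rw [hmin, hterm]
        linarith
    calc |η s - η r - (s - r) * D|
        = |(S1 - R1 + (s - r) / 2 * TL) + W + (S3 - R3 + (s - r) / 2 * TR)| := by rw [hNid]
      _ ≤ |S1 - R1 + (s - r) / 2 * TL| + |W| + |S3 - R3 + (s - r) / 2 * TR| :=
          abs_add_three _ _ _
      _ ≤ (|S1 - R1| + |(s - r) / 2 * TL|) + |W| + (|S3 - R3| + |(s - r) / 2 * TR|) := by
          gcongr <;> exact abs_add_le _ _
      _ ≤ (Real.sqrt (M * h) * (2 * δ) + h / 2 * (M / Real.sqrt c * (2 * Real.sqrt δ)))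
          + (M * h) ^ 2 / μδ * CT
          + (Real.sqrt (M * h) * (2 * δ) + h / 2 * (M / Real.sqrt c * (2 * Real.sqrt δ))) := by
          exact add_le_add (add_le_add (add_le_add hB1 hTLb) hcore)
            (add_le_add hB3 hTRb)
      _ ≤ h * (4 * Real.sqrt M * h ^ ((1:ℝ)/6)) + h * ((2 * M / Real.sqrt c) * h ^ ((1:ℝ)/3))
          + ((M * h) ^ 2 / μδ * CT) := by
          have id1 : Real.sqrt (M * h) * (2 * δ) + Real.sqrt (M * h) * (2 * δ)
              = h * (4 * Real.sqrt M * h ^ ((1:ℝ)/6)) := by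
            rw [e1]
            linear_combination (4 * Real.sqrt M) * e4
          have id2 : h / 2 * (M / Real.sqrt c * (2 * Real.sqrt δ))
              + h / 2 * (M / Real.sqrt c * (2 * Real.sqrt δ))
              = h * ((2 * M / Real.sqrt c) * h ^ ((1:ℝ)/3)) := by
            rw [e3]
            ring
          linarith [id1, id2]
      _ ≤ h * Φ s := by
          rw [hΦdef]
          simp only
          rw [← hhdef]
          have expand : h * (4 * Real.sqrt M * h ^ ((1:ℝ)/6)
              + 2 * M / Real.sqrt c * h ^ ((1:ℝ)/3)
              + M ^ 2 * CT / c * h ^ ((1:ℝ)/3) + M ^ 2 * CT / m₂ * h)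
              = h * (4 * Real.sqrt M * h ^ ((1:ℝ)/6)) + h * ((2 * M / Real.sqrt c) * h ^ ((1:ℝ)/3))
              + (h * (M ^ 2 * CT / c * h ^ ((1:ℝ)/3)) + h * (M ^ 2 * CT / m₂ * h)) := by
            ring
          rw [expand]
          linarith [e5]
  -- conclude
  have h9 : slope η r s - D = (η s - η r - (s - r) * D) / (s - r) := by
    rw [slope_def_field,
      show (η s - η r - (s - r) * D) / (s - r) = (η s - η r) / (s - r) - D from by
        rw [sub_div, mul_div_cancel_left₀ _ (sub_ne_zero.2 hne)]]
  rw [h9, abs_div, ← hhdef, div_le_iff₀ hh]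
  calc |η s - η r - (s - r) * D| ≤ h * Φ s := hNb
    _ = Φ s * h := by ring

end KEY

/-- Let `b₀, b₁` be C² with `b₁ ≥ ε₀ > 0` on `[A,B]`, and for each
parameter `r` in an interval let `z⁻(r) < z⁺(r)` be the two simple zeros of
`z ↦ b₀(z) + r b₁(z)`, between which it is negative (and positive elsewhere on
`[A,B]`). Then the action `η(r) = ∫_{z⁻(r)}^{z⁺(r)} (-b₀ - rb₁)^{1/2} dz` is
differentiable with `η'(r) = -½∫_{z⁻}^{z⁺} b₁·(-b₀-rb₁)^{-1/2} dz`, and `η` is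
strictly decreasing. -/
theorem stmt15 (A B r₁ r₂ ε₀ : ℝ) (b₀ b₁ : ℝ → ℝ) (zm zp : ℝ → ℝ)
    (hb₀ : ContDiff ℝ 2 b₀) (hb₁ : ContDiff ℝ 2 b₁) (hε₀ : 0 < ε₀)
    (hb₁lb : ∀ z ∈ Icc A B, ε₀ ≤ b₁ z)
    (hr : r₁ < r₂)
    (hz : ∀ r ∈ Ioo r₁ r₂, A < zm r ∧ zm r < zp r ∧ zp r < B)
    (hneg : ∀ r ∈ Ioo r₁ r₂, ∀ z ∈ Ioo (zm r) (zp r), b₀ z + r * b₁ z < 0)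
    (hzero : ∀ r ∈ Ioo r₁ r₂,
      b₀ (zm r) + r * b₁ (zm r) = 0 ∧ b₀ (zp r) + r * b₁ (zp r) = 0)
    (hpos : ∀ r ∈ Ioo r₁ r₂, ∀ z ∈ Icc A B,
      z ∉ Icc (zm r) (zp r) → 0 < b₀ z + r * b₁ z)
    (hsimple : ∀ r ∈ Ioo r₁ r₂,
      deriv (fun z => b₀ z + r * b₁ z) (zm r) ≠ 0 ∧
      deriv (fun z => b₀ z + r * b₁ z) (zp r) ≠ 0) :
    (∀ r ∈ Ioo r₁ r₂,
      HasDerivAt (fun s => ∫ z in (zm s)..(zp s), Real.sqrt (-(b₀ z + s * b₁ z)))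
        (-(1 / 2) * ∫ z in (zm r)..(zp r),
          b₁ z / Real.sqrt (-(b₀ z + r * b₁ z))) r) ∧
    StrictAntiOn (fun s => ∫ z in (zm s)..(zp s), Real.sqrt (-(b₀ z + s * b₁ z)))
      (Ioo r₁ r₂) := by
  constructor
  · intro r hrm
    exact (key hb₀ hb₁ hε₀ hb₁lb hz hneg hzero hpos hsimple hrm).1
  · refine strictAntiOn_of_deriv_neg (convex_Ioo r₁ r₂) ?_ ?_
    · intro x hx
      exact ((key hb₀ hb₁ hε₀ hb₁lb hz hneg hzero hpos hsimple hx).1.continuousAt).continuousWithinAt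
    · intro x hx
      rw [interior_Ioo] at hx
      obtain ⟨hd, hT⟩ := key hb₀ hb₁ hε₀ hb₁lb hz hneg hzero hpos hsimple hx
      rw [hd.deriv]
      nlinarith
end

section
/- Let f: ℝ² → ℝ be C² on a neighborhood of a compact set K, and suppose the non-degeneracy condition: for every x ∈ K, |∇f(x)| ≤ ε implies |det Hess f(x)| ≥ ε. Then there exists C such that for all γ ∈ (0, ε]: mes({x ∈ K : |∇f(x)| ≤ γ}) ≤ Cγ². -/
open Set MeasureTheory

noncomputable abbrev E2 := EuclideanSpace ℝ (Fin 2)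

/-- The Hessian matrix of `f` at `x` in the standard basis of `ℝ²`. -/
noncomputable def hess2 (f : EuclideanSpace ℝ (Fin 2) → ℝ)
    (x : EuclideanSpace ℝ (Fin 2)) : Matrix (Fin 2) (Fin 2) ℝ :=
  fun i j => fderiv ℝ (fun y => fderiv ℝ f y (EuclideanSpace.single j 1)) x
    (EuclideanSpace.single i 1)

/-- The coordinate extraction continuous linear map. -/
noncomputable def coordCLM : (E2 →L[ℝ] ℝ) →L[ℝ] E2 :=
  (PiLp.continuousLinearEquiv 2 ℝ (fun _ : Fin 2 => ℝ)).symm.toContinuousLinearMap.comp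
    (ContinuousLinearMap.pi fun i => ContinuousLinearMap.apply ℝ ℝ (EuclideanSpace.single i 1))

/-- The gradient map as a map `ℝ² → ℝ²`. -/
noncomputable def grad2 (f : E2 → ℝ) (y : E2) : E2 := coordCLM (fderiv ℝ f y)

lemma grad2_apply (f : E2 → ℝ) (y : E2) (i : Fin 2) :
    grad2 f y i = fderiv ℝ f y (EuclideanSpace.single i 1) := rfl

lemma det_fderiv_grad2 (f : E2 → ℝ) (x : E2)
    (hdiff : DifferentiableAt ℝ (grad2 f) x) :
    (fderiv ℝ (grad2 f) x).det = (hess2 f x).det := by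
  set L := fderiv ℝ (grad2 f) x with hL
  have hcomp : ∀ i : Fin 2, ∀ v : E2,
      L v i = fderiv ℝ (fun y => fderiv ℝ f y (EuclideanSpace.single i 1)) x v := by
    intro i v
    have h0 := (EuclideanSpace.proj (𝕜 := ℝ) (ι := Fin 2) i).hasFDerivAt.comp x
      hdiff.hasFDerivAt
    have h1 : HasFDerivAt (fun y => fderiv ℝ f y (EuclideanSpace.single i 1))
        ((EuclideanSpace.proj i).comp L) x := h0
    rw [h1.fderiv]
    rfl
  have hentry : ∀ i j : Fin 2, hess2 f x i j = L (EuclideanSpace.single i 1) j := by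
    intro i j
    rw [hess2, hcomp j (EuclideanSpace.single i 1)]
  let b := (EuclideanSpace.basisFun (Fin 2) ℝ).toBasis
  have hmat : LinearMap.toMatrix b b L.toLinearMap = (hess2 f x).transpose := by
    ext i j
    rw [LinearMap.toMatrix_apply, Matrix.transpose_apply, hentry j i]
    show b.repr (L (b j)) i = _
    have hbj : b j = EuclideanSpace.single j 1 := by
      simp [b, EuclideanSpace.basisFun_apply]
    rw [hbj]
    exact (EuclideanSpace.basisFun (Fin 2) ℝ).coe_toBasis_repr_apply _ i
  show LinearMap.det L.toLinearMap = _
  rw [← LinearMap.det_toMatrix b, hmat, Matrix.det_transpose]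


/-- If `f` is C² near a compact set `K ⊆ ℝ²` and satisfies the
non-degeneracy condition `|∇f(x)| ≤ ε ⟹ |det Hess f(x)| ≥ ε` on `K`, then
there is `C` with `mes({x ∈ K : |∇f(x)| ≤ γ}) ≤ Cγ²` for all `γ ∈ (0,ε]`. -/
theorem stmt18 (K U : Set (EuclideanSpace ℝ (Fin 2)))
    (f : EuclideanSpace ℝ (Fin 2) → ℝ) (ε : ℝ) (hε : 0 < ε)
    (hK : IsCompact K) (hU : IsOpen U) (hKU : K ⊆ U)
    (hf : ContDiffOn ℝ 2 f U)
    (hnd : ∀ x ∈ K, ‖fderiv ℝ f x‖ ≤ ε → ε ≤ |(hess2 f x).det|) :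
    ∃ C : ℝ, ∀ γ : ℝ, 0 < γ → γ ≤ ε →
      MeasureTheory.volume {x ∈ K | ‖fderiv ℝ f x‖ ≤ γ} ≤
        ENNReal.ofReal (C * γ ^ 2) := by
  classical
  have hdf : ContDiffOn ℝ 1 (fderiv ℝ f) U :=
    hf.fderiv_of_isOpen hU (by norm_num)
  have hg1 : ContDiffOn ℝ 1 (grad2 f) U := by
    have := coordCLM.contDiff.comp_contDiffOn hdf
    exact this
  have hgdiff : ∀ x ∈ U, DifferentiableAt ℝ (grad2 f) x := fun x hx =>
    ((hg1.contDiffAt (hU.mem_nhds hx)).differentiableAt one_ne_zero)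
  have hcl : ∀ δ : ℝ, IsCompact {x ∈ K | ‖fderiv ℝ f x‖ ≤ δ} := by
    intro δ
    refine hK.of_isClosed_subset ?_ (fun x hx => hx.1)
    refine isClosed_of_closure_subset fun x hx => ?_
    have hxK : x ∈ K := hK.isClosed.closure_subset
      (closure_mono (fun y hy => hy.1) hx)
    have hcont : ContinuousAt (fun y => ‖fderiv ℝ f y‖) x :=
      (continuous_norm.continuousAt).comp
        ((hdf.continuousOn.continuousAt (hU.mem_nhds (hKU hxK))))
    refine ⟨hxK, ?_⟩
    haveI : (nhdsWithin x {x ∈ K | ‖fderiv ℝ f x‖ ≤ δ}).NeBot :=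
      mem_closure_iff_nhdsWithin_neBot.1 hx
    exact le_of_tendsto (hcont.continuousWithinAt)
      (eventually_nhdsWithin_of_forall
        (s := {x ∈ K | ‖fderiv ℝ f x‖ ≤ δ}) fun y hy => hy.2)
  set A := {x ∈ K | ‖fderiv ℝ f x‖ ≤ ε} with hA
  have hAc : IsCompact A := hcl ε
  have key : ∀ x ∈ A, ∃ V : Set E2, V ∈ nhds x ∧ IsOpen V ∧
      InjOn (grad2 f) V := by
    intro x hx
    have hxU : x ∈ U := hKU hx.1
    have hdet : (fderiv ℝ (grad2 f) x).det ≠ 0 := by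
      rw [det_fderiv_grad2 f x (hgdiff x hxU)]
      intro h
      have := hnd x hx.1 hx.2
      rw [h, abs_zero] at this
      linarith
    have hstrict : HasStrictFDerivAt (grad2 f) (fderiv ℝ (grad2 f) x) x :=
      (hg1.contDiffAt (hU.mem_nhds hxU)).hasStrictFDerivAt one_ne_zero
    set eL : E2 ≃ₗ[ℝ] E2 :=
      LinearMap.equivOfDetNeZero (fderiv ℝ (grad2 f) x).toLinearMap hdet with heL
    set eCL : E2 ≃L[ℝ] E2 := eL.toContinuousLinearEquiv with heCL
    have hcoe : (eCL : E2 →L[ℝ] E2) = fderiv ℝ (grad2 f) x := by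
      apply ContinuousLinearMap.ext
      intro v
      rfl
    have hstrict' : HasStrictFDerivAt (grad2 f) (eCL : E2 →L[ℝ] E2) x := by
      rw [hcoe]; exact hstrict
    refine ⟨(HasStrictFDerivAt.toOpenPartialHomeomorph (grad2 f) hstrict').source,
      (HasStrictFDerivAt.toOpenPartialHomeomorph (grad2 f) hstrict').open_source.mem_nhds
        (HasStrictFDerivAt.mem_toOpenPartialHomeomorph_source hstrict'),
      (HasStrictFDerivAt.toOpenPartialHomeomorph (grad2 f) hstrict').open_source, ?_⟩
    have := (HasStrictFDerivAt.toOpenPartialHomeomorph (grad2 f) hstrict').injOn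
    rwa [HasStrictFDerivAt.toOpenPartialHomeomorph_coe hstrict'] at this
  choose! V hV1 hV2 hV3 using key
  obtain ⟨t, hts, hcover⟩ := hAc.elim_nhds_subcover V (fun x hx => hV1 x hx)
  set c := MeasureTheory.volume (Metric.ball (0 : E2) 1) with hc
  have hcfin : c ≠ ⊤ := by
    refine ((measure_mono Metric.ball_subset_closedBall).trans_lt ?_).ne
    exact (isCompact_closedBall (0 : E2) 1).measure_lt_top
  refine ⟨(t.card : ℝ) * 4 * c.toReal / ε, ?_⟩
  intro γ hγ hγε
  set S := {x ∈ K | ‖fderiv ℝ f x‖ ≤ γ} with hS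
  have hSA : S ⊆ A := fun x hx => ⟨hx.1, hx.2.trans hγε⟩
  have hSc : IsCompact S := hcl γ
  have hSU : S ⊆ U := fun x hx => hKU hx.1
  have hpiece : ∀ x ∈ t, ENNReal.ofReal ε * MeasureTheory.volume (S ∩ V x) ≤
      ENNReal.ofReal ((2 * γ) ^ 2) * c := by
    intro x hxt
    have hxA : x ∈ A := hts x hxt
    set s := S ∩ V x with hs
    have hsm : MeasurableSet s :=
      (hSc.isClosed.measurableSet).inter (hV2 x hxA).measurableSet
    have hferiv : ∀ y ∈ s, HasFDerivWithinAt (grad2 f) (fderiv ℝ (grad2 f) y) s y :=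
      fun y hy => ((hgdiff y (hSU hy.1)).hasFDerivAt).hasFDerivWithinAt
    have hinj : InjOn (grad2 f) s := (hV3 x hxA).mono inter_subset_right
    have hcov := MeasureTheory.lintegral_abs_det_fderiv_eq_addHaar_image
      MeasureTheory.volume hsm hferiv hinj
    have hlow : ENNReal.ofReal ε * MeasureTheory.volume s ≤
        ∫⁻ y in s, ENNReal.ofReal |(fderiv ℝ (grad2 f) y).det| ∂MeasureTheory.volume := by
      rw [← MeasureTheory.setLIntegral_const]
      refine MeasureTheory.setLIntegral_mono ?_ ?_
      · exact (ENNReal.measurable_ofReal.comp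
          ((continuous_abs.comp ContinuousLinearMap.continuous_det).measurable.comp
            (measurable_fderiv ℝ (grad2 f))))
      · intro y hy
        refine ENNReal.ofReal_le_ofReal ?_
        rw [det_fderiv_grad2 f y (hgdiff y (hSU hy.1))]
        exact hnd y hy.1.1 (hy.1.2.trans hγε)
    have himg : grad2 f '' s ⊆ Metric.closedBall (0 : E2) (2 * γ) := by
      rintro - ⟨y, hy, rfl⟩
      rw [Metric.mem_closedBall, dist_zero_right]
      have hb : ∀ i : Fin 2, ‖grad2 f y i‖ ≤ γ := by
        intro i
        rw [grad2_apply]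
        calc ‖fderiv ℝ f y (EuclideanSpace.single i 1)‖
            ≤ ‖fderiv ℝ f y‖ * ‖EuclideanSpace.single (𝕜 := ℝ) i (1:ℝ)‖ :=
              (fderiv ℝ f y).le_opNorm _
          _ = ‖fderiv ℝ f y‖ := by rw [EuclideanSpace.norm_single]; simp
          _ ≤ γ := hy.1.2
      have hsum : ∑ i : Fin 2, ‖grad2 f y i‖ ^ 2 ≤ (2 * γ) ^ 2 := by
        have h1 : ∀ i : Fin 2, ‖grad2 f y i‖ ^ 2 ≤ γ ^ 2 := fun i => by
          have := hb i
          nlinarith [norm_nonneg (grad2 f y i)]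
        calc ∑ i : Fin 2, ‖grad2 f y i‖ ^ 2 ≤ ∑ _i : Fin 2, γ ^ 2 :=
              Finset.sum_le_sum fun i _ => h1 i
          _ = 2 * γ ^ 2 := by simp [Finset.sum_const]
          _ ≤ (2 * γ) ^ 2 := by nlinarith
      calc ‖grad2 f y‖ = Real.sqrt (∑ i : Fin 2, ‖grad2 f y i‖ ^ 2) := by
            rw [EuclideanSpace.norm_eq]
        _ ≤ Real.sqrt ((2 * γ) ^ 2) := Real.sqrt_le_sqrt hsum
        _ = 2 * γ := Real.sqrt_sq (by positivity)
    have hball : MeasureTheory.volume (Metric.closedBall (0 : E2) (2 * γ)) =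
        ENNReal.ofReal ((2 * γ) ^ 2) * c := by
      rw [hc, MeasureTheory.Measure.addHaar_closedBall _ _ (by positivity)]
      congr 2
      simp [finrank_euclideanSpace_fin]
    calc ENNReal.ofReal ε * MeasureTheory.volume s
        ≤ ∫⁻ y in s, ENNReal.ofReal |(fderiv ℝ (grad2 f) y).det| ∂MeasureTheory.volume :=
          hlow
      _ = MeasureTheory.volume (grad2 f '' s) := hcov
      _ ≤ MeasureTheory.volume (Metric.closedBall (0 : E2) (2 * γ)) :=
          measure_mono himg
      _ = ENNReal.ofReal ((2 * γ) ^ 2) * c := hball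
  -- sum the pieces
  have hsum : ENNReal.ofReal ε * MeasureTheory.volume S ≤
      (t.card : ENNReal) * (ENNReal.ofReal ((2 * γ) ^ 2) * c) := by
    have h1 : MeasureTheory.volume S ≤ ∑ x ∈ t, MeasureTheory.volume (S ∩ V x) := by
      refine (measure_mono ?_).trans (measure_biUnion_finset_le t _)
      intro y hy
      obtain ⟨x, hx, hyx⟩ := mem_iUnion₂.1 (hcover (hSA hy))
      exact mem_iUnion₂.2 ⟨x, hx, hy, hyx⟩
    calc ENNReal.ofReal ε * MeasureTheory.volume S
        ≤ ENNReal.ofReal ε * ∑ x ∈ t, MeasureTheory.volume (S ∩ V x) := by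
          exact mul_le_mul_right h1 _
      _ = ∑ x ∈ t, ENNReal.ofReal ε * MeasureTheory.volume (S ∩ V x) := by
          rw [Finset.mul_sum]
      _ ≤ ∑ _x ∈ t, ENNReal.ofReal ((2 * γ) ^ 2) * c :=
          Finset.sum_le_sum hpiece
      _ = (t.card : ENNReal) * (ENNReal.ofReal ((2 * γ) ^ 2) * c) := by
          rw [Finset.sum_const, nsmul_eq_mul]
  -- conclude
  have hεne : ENNReal.ofReal ε ≠ 0 := (ENNReal.ofReal_pos.mpr hε).ne'
  rw [← ENNReal.mul_le_mul_iff_right hεne ENNReal.ofReal_ne_top]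
  refine hsum.trans ?_
  have hcr : c = ENNReal.ofReal c.toReal := (ENNReal.ofReal_toReal hcfin).symm
  rw [hcr]
  rw [show ((t.card : ENNReal)) = ENNReal.ofReal (t.card : ℝ) by
    rw [ENNReal.ofReal_natCast]]
  rw [← ENNReal.ofReal_mul (p := (2 * γ) ^ 2) (by positivity),
    ← ENNReal.ofReal_mul (p := (t.card : ℝ)) (Nat.cast_nonneg _),
    ← ENNReal.ofReal_mul (le_of_lt hε)]
  refine ENNReal.ofReal_le_ofReal ?_
  have hcnn : 0 ≤ c.toReal := ENNReal.toReal_nonneg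
  rw [ENNReal.toReal_ofReal hcnn]
  generalize c.toReal = r at hcnn ⊢
  rw [show ε * (↑t.card * 4 * r / ε * γ ^ 2) = ↑t.card * 4 * r * γ ^ 2 by
    rw [div_mul_eq_mul_div, mul_div_cancel₀ _ hε.ne']]
  ring_nf
  nlinarith [hcnn, sq_nonneg γ]
end

section
/- Let f: ℝ² → ℝ be C² on a neighborhood of a compact set K satisfying the intermediate non-degeneracy condition: |∇f(x)| ≤ ε implies ‖Hess f(x)‖ ≥ ε (some second derivative, i.e. the Hessian matrix norm, is bounded below). Then there exists C such that for all γ ∈ (0,ε]: mes({x ∈ K : |∇f(x)| ≤ γ}) ≤ Cγ. -/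
open Set

open MeasureTheory

section Aux

lemma coord_le_dist (y z : EuclideanSpace ℝ (Fin 2)) (k : Fin 2) : |y k - z k| ≤ dist y z := by
  rw [EuclideanSpace.dist_eq, ← Real.sqrt_sq_eq_abs]
  apply Real.sqrt_le_sqrt
  have := Finset.single_le_sum (f := fun i => dist (y i) (z i) ^ 2)
    (fun i _ => sq_nonneg _) (Finset.mem_univ k)
  simpa [Real.dist_eq] using this

lemma aux_1d (T : Set ℝ) (d : ℝ) (h : ∀ a ∈ T, ∀ b ∈ T, |a - b| ≤ d) :
    volume T ≤ ENNReal.ofReal (2 * d) := by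
  rcases T.eq_empty_or_nonempty with rfl | ⟨a₀, ha₀⟩
  · simp
  · have hsub : T ⊆ Icc (a₀ - d) (a₀ + d) := by
      intro b hb
      have := h b hb a₀ ha₀
      rw [abs_le] at this
      exact ⟨by linarith [this.1], by linarith [this.2]⟩
    calc volume T ≤ volume (Icc (a₀ - d) (a₀ + d)) := measure_mono hsub
      _ = ENNReal.ofReal (2 * d) := by rw [Real.volume_Icc]; ring_nf

lemma aux_fub (A : Set (ℝ × ℝ)) (hA : MeasurableSet A) (c r d : ℝ)
    (hproj : ∀ p ∈ A, p.1 ∈ Icc (c - r) (c + r))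
    (hsl : ∀ x a b, (x, a) ∈ A → (x, b) ∈ A → |a - b| ≤ d) :
    volume A ≤ ENNReal.ofReal (2 * d) * ENNReal.ofReal (2 * r) := by
  rw [Measure.volume_eq_prod, Measure.prod_apply hA]
  have hb : ∀ x : ℝ, volume (Prod.mk x ⁻¹' A) ≤
      (Icc (c - r) (c + r)).indicator (fun _ => ENNReal.ofReal (2 * d)) x := by
    intro x
    rcases (Prod.mk x ⁻¹' A).eq_empty_or_nonempty with he | ⟨a, ha⟩
    · simp [he]
    · rw [indicator_of_mem (hproj _ ha)]
      exact aux_1d _ _ (fun a ha b hb => hsl x a b ha hb)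
  calc ∫⁻ x, volume (Prod.mk x ⁻¹' A)
      ≤ ∫⁻ x, (Icc (c - r) (c + r)).indicator (fun _ => ENNReal.ofReal (2 * d)) x :=
        lintegral_mono hb
    _ = ENNReal.ofReal (2 * d) * volume (Icc (c - r) (c + r)) :=
        lintegral_indicator_const measurableSet_Icc _
    _ ≤ ENNReal.ofReal (2 * d) * ENNReal.ofReal (2 * r) := by
        rw [Real.volume_Icc]
        exact mul_le_mul_right (ENNReal.ofReal_le_ofReal (by ring_nf; exact le_rfl)) _

noncomputable def eE1 : EuclideanSpace ℝ (Fin 2) ≃ᵐ ℝ × ℝ :=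
  (MeasurableEquiv.toLp 2 (Fin 2 → ℝ)).symm.trans (MeasurableEquiv.piFinTwo (fun _ => ℝ))

noncomputable def eE0 : EuclideanSpace ℝ (Fin 2) ≃ᵐ ℝ × ℝ := eE1.trans MeasurableEquiv.prodComm

lemma exists_equiv (i : Fin 2) : ∃ (e : EuclideanSpace ℝ (Fin 2) ≃ᵐ ℝ × ℝ) (k' : Fin 2),
    (∀ k : Fin 2, k ≠ i → k = k') ∧ MeasurePreserving e volume volume ∧
    ∀ y : EuclideanSpace ℝ (Fin 2), e y = (y k', y i) := by
  have pres1 : MeasurePreserving eE1 volume volume :=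
    (volume_preserving_piFinTwo (fun _ => ℝ)).comp
      (EuclideanSpace.volume_preserving_symm_measurableEquiv_toLp (Fin 2))
  have presC : MeasurePreserving (MeasurableEquiv.prodComm : ℝ × ℝ ≃ᵐ ℝ × ℝ) volume volume := by
    rw [Measure.volume_eq_prod]
    exact Measure.measurePreserving_swap
  fin_cases i
  · exact ⟨eE0, 1, by decide, presC.comp pres1, fun y => rfl⟩
  · exact ⟨eE1, 0, by decide, pres1, fun y => rfl⟩

lemma hess_cont (U : Set (EuclideanSpace ℝ (Fin 2))) (f : EuclideanSpace ℝ (Fin 2) → ℝ)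
    (hU : IsOpen U) (hf : ContDiffOn ℝ 2 f U) (i j : Fin 2) :
    ContinuousOn (fun y => hess2 f y i j) U := by
  have hd1 : ContDiffOn ℝ 1 (fderiv ℝ f) U := hf.fderiv_of_isOpen hU (by norm_num)
  have hdiff : DifferentiableOn ℝ (fderiv ℝ f) U := hd1.differentiableOn one_ne_zero
  have hc2 : ContinuousOn (fderiv ℝ (fderiv ℝ f)) U :=
    hd1.continuousOn_fderiv_of_isOpen hU le_rfl
  have heq : ∀ w ∈ U, hess2 f w i j =
      fderiv ℝ (fderiv ℝ f) w (EuclideanSpace.single i 1) (EuclideanSpace.single j 1) := by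
    intro w hw
    have h1 : HasFDerivAt (fderiv ℝ f) (fderiv ℝ (fderiv ℝ f) w) w :=
      (hdiff.differentiableAt (hU.mem_nhds hw)).hasFDerivAt
    have h2 := (ContinuousLinearMap.apply ℝ ℝ
      (EuclideanSpace.single j (1:ℝ))).hasFDerivAt.comp w h1
    have h3 : fderiv ℝ (fun y => fderiv ℝ f y (EuclideanSpace.single j 1)) w =
        (ContinuousLinearMap.apply ℝ ℝ (EuclideanSpace.single j (1:ℝ))).comp
          (fderiv ℝ (fderiv ℝ f) w) := h2.fderiv
    show fderiv ℝ (fun y => fderiv ℝ f y (EuclideanSpace.single j 1)) w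
      (EuclideanSpace.single i 1) = _
    rw [h3]; rfl
  apply ContinuousOn.congr _ heq
  exact (hc2.clm_apply continuousOn_const).clm_apply continuousOn_const

lemma slice_core (U : Set (EuclideanSpace ℝ (Fin 2)))
    (f : EuclideanSpace ℝ (Fin 2) → ℝ) (ε γ : ℝ) (hε : 0 < ε)
    (hU : IsOpen U) (hf : ContDiffOn ℝ 2 f U)
    (x₀ : EuclideanSpace ℝ (Fin 2)) (r : ℝ) (hr : Metric.ball x₀ r ⊆ U)
    (i j : Fin 2) (hH : ∀ y ∈ Metric.ball x₀ r, ε / 2 ≤ |hess2 f y i j|)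
    (y z : EuclideanSpace ℝ (Fin 2))
    (hy : y ∈ Metric.ball x₀ r) (hz : z ∈ Metric.ball x₀ r)
    (hyg : ‖fderiv ℝ f y‖ ≤ γ) (hzg : ‖fderiv ℝ f z‖ ≤ γ)
    (hcoord : ∀ k, k ≠ i → y k = z k) (hlt : y i < z i) :
    z i - y i ≤ 4 * γ / ε := by
  set a := y i with ha
  set b := z i with hb
  set vi : EuclideanSpace ℝ (Fin 2) := EuclideanSpace.single i 1 with hvi
  set vj : EuclideanSpace ℝ (Fin 2) := EuclideanSpace.single j 1 with hvj
  set p : ℝ → EuclideanSpace ℝ (Fin 2) := fun s => y + (s - a) • vi with hp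
  set g : EuclideanSpace ℝ (Fin 2) → ℝ := fun w => fderiv ℝ f w vj with hg
  have hpa : p a = y := by
    ext k; simp [hp]
  have hpb : p b = z := by
    ext k
    by_cases hk : k = i
    · subst hk; simp [hp, hvi, EuclideanSpace.single_apply]; linarith [ha, hb]
    · simp [hp, hvi, EuclideanSpace.single_apply, hk, hcoord k hk]
  have hmem : ∀ s ∈ Icc a b, p s ∈ Metric.ball x₀ r := by
    intro s hs
    have hba : (0:ℝ) < b - a := by linarith [hlt]
    set t := (s - a) / (b - a) with htdef
    have ht0 : 0 ≤ t := div_nonneg (by linarith [hs.1]) hba.le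
    have ht1 : t ≤ 1 := by
      rw [div_le_one hba]; linarith [hs.2]
    have hcomb := (convex_ball x₀ r) hy hz (by linarith : (0:ℝ) ≤ 1 - t) ht0 (by ring)
    have : p s = (1 - t) • y + t • z := by
      ext k
      by_cases hk : k = i
      · subst hk
        simp only [hp, PiLp.add_apply, PiLp.smul_apply, hvi,
          EuclideanSpace.single_apply, if_pos rfl, if_true, smul_eq_mul]
        field_simp [htdef]
        have hts : t * (b - a) = s - a := by rw [htdef]; field_simp
        rw [← ha, ← hb]
        linear_combination (-1 : ℝ) * hts
      · simp only [hp, PiLp.add_apply, PiLp.smul_apply, hvi,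
          EuclideanSpace.single_apply, hk, if_false, smul_eq_mul, hcoord k hk]
        ring
    rw [this]; exact hcomb
  have hd1 : ContDiffOn ℝ 1 (fderiv ℝ f) U := hf.fderiv_of_isOpen hU (by norm_num)
  have hdiff : DifferentiableOn ℝ (fderiv ℝ f) U := hd1.differentiableOn one_ne_zero
  have hgderiv : ∀ w ∈ U, HasFDerivAt g
      ((ContinuousLinearMap.apply ℝ ℝ vj).comp (fderiv ℝ (fderiv ℝ f) w)) w := by
    intro w hw
    have h1 : HasFDerivAt (fderiv ℝ f) (fderiv ℝ (fderiv ℝ f) w) w :=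
      (hdiff.differentiableAt (hU.mem_nhds hw)).hasFDerivAt
    exact (ContinuousLinearMap.apply ℝ ℝ vj).hasFDerivAt.comp w h1
  have hesseq : ∀ w ∈ U, hess2 f w i j =
      ((ContinuousLinearMap.apply ℝ ℝ vj).comp (fderiv ℝ (fderiv ℝ f) w)) vi := by
    intro w hw
    have : fderiv ℝ g w = (ContinuousLinearMap.apply ℝ ℝ vj).comp (fderiv ℝ (fderiv ℝ f) w) :=
      (hgderiv w hw).fderiv
    show fderiv ℝ g w vi = _
    rw [this]
  have hpderiv : ∀ s : ℝ, HasDerivAt p vi s := by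
    intro s
    have h1 : HasDerivAt (fun u : ℝ => u - a) 1 s := (hasDerivAt_id s).sub_const _
    have h2 := (h1.smul_const vi).const_add y
    simpa [hp] using h2
  have hhd : ∀ s ∈ Icc a b, HasDerivAt (g ∘ p) (hess2 f (p s) i j) s := by
    intro s hs
    have hpsU : p s ∈ U := hr (hmem s hs)
    have := (hgderiv (p s) hpsU).comp_hasDerivAt s (hpderiv s)
    rw [hesseq (p s) hpsU]
    exact this
  obtain ⟨c, hc, hceq⟩ := exists_hasDerivAt_eq_slope (g ∘ p) (fun s => hess2 f (p s) i j) hlt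
    (fun s hs => ((hhd s hs).continuousAt).continuousWithinAt)
    (fun s hs => hhd s (Ioo_subset_Icc_self hs))
  have hnormvj : ‖vj‖ = 1 := by simp [hvj]
  have hga : |(g ∘ p) a| ≤ γ := by
    rw [Function.comp_apply, hpa]
    calc |fderiv ℝ f y vj| ≤ ‖fderiv ℝ f y‖ * ‖vj‖ := (fderiv ℝ f y).le_opNorm vj
      _ ≤ γ := by rw [hnormvj]; simpa using hyg
  have hgb : |(g ∘ p) b| ≤ γ := by
    rw [Function.comp_apply, hpb]
    calc |fderiv ℝ f z vj| ≤ ‖fderiv ℝ f z‖ * ‖vj‖ := (fderiv ℝ f z).le_opNorm vj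
      _ ≤ γ := by rw [hnormvj]; simpa using hzg
  have hba : (0:ℝ) < b - a := by linarith
  have hcH : ε / 2 ≤ |hess2 f (p c) i j| := hH _ (hmem c (Ioo_subset_Icc_self hc))
  rw [hceq, abs_div, abs_of_pos hba] at hcH
  rw [le_div_iff₀ hba] at hcH
  have habs : |(g ∘ p) b - (g ∘ p) a| ≤ 2 * γ := by
    calc |(g ∘ p) b - (g ∘ p) a| ≤ |(g ∘ p) b| + |(g ∘ p) a| := abs_sub _ _
      _ ≤ 2 * γ := by linarith
  show b - a ≤ 4 * γ / ε
  rw [le_div_iff₀ hε]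
  nlinarith [hcH, habs, hba, hε]

lemma slice_wrap (U : Set (EuclideanSpace ℝ (Fin 2)))
    (f : EuclideanSpace ℝ (Fin 2) → ℝ) (ε γ : ℝ) (hε : 0 < ε) (hγ : 0 < γ)
    (hU : IsOpen U) (hf : ContDiffOn ℝ 2 f U)
    (x₀ : EuclideanSpace ℝ (Fin 2)) (r : ℝ) (hr : Metric.ball x₀ r ⊆ U)
    (i j : Fin 2) (hH : ∀ y ∈ Metric.ball x₀ r, ε / 2 ≤ |hess2 f y i j|)
    (y z : EuclideanSpace ℝ (Fin 2))
    (hy : y ∈ Metric.ball x₀ r) (hz : z ∈ Metric.ball x₀ r)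
    (hyg : ‖fderiv ℝ f y‖ ≤ γ) (hzg : ‖fderiv ℝ f z‖ ≤ γ)
    (hcoord : ∀ k, k ≠ i → y k = z k) :
    |y i - z i| ≤ 4 * γ / ε := by
  rcases lt_trichotomy (y i) (z i) with h | h | h
  · rw [abs_sub_comm, abs_of_pos (by linarith)]
    exact slice_core U f ε γ hε hU hf x₀ r hr i j hH y z hy hz hyg hzg hcoord h
  · rw [h]; simp; positivity
  · rw [abs_of_pos (by linarith)]
    exact slice_core U f ε γ hε hU hf x₀ r hr i j hH z y hz hy hzg hyg
      (fun k hk => (hcoord k hk).symm) h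

end Aux

/-- If `f` is C² near a compact set `K ⊆ ℝ²` and satisfies the
intermediate non-degeneracy condition: `|∇f(x)| ≤ ε` implies some second
derivative of `f` at `x` (entry of the Hessian matrix) is at least `ε` in
absolute value, then there is `C` with `mes({x ∈ K : |∇f(x)| ≤ γ}) ≤ Cγ` for
all `γ ∈ (0,ε]`. -/
theorem stmt19 (K U : Set (EuclideanSpace ℝ (Fin 2)))
    (f : EuclideanSpace ℝ (Fin 2) → ℝ) (ε : ℝ) (hε : 0 < ε)
    (hK : IsCompact K) (hU : IsOpen U) (hKU : K ⊆ U)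
    (hf : ContDiffOn ℝ 2 f U)
    (hnd : ∀ x ∈ K, ‖fderiv ℝ f x‖ ≤ ε → ∃ i j, ε ≤ |hess2 f x i j|) :
    ∃ C : ℝ, ∀ γ : ℝ, 0 < γ → γ ≤ ε →
      MeasureTheory.volume {x ∈ K | ‖fderiv ℝ f x‖ ≤ γ} ≤
        ENNReal.ofReal (C * γ) := by
  have hSm : ∀ γ : ℝ, MeasurableSet {x ∈ K | ‖fderiv ℝ f x‖ ≤ γ} := fun γ =>
    hK.isClosed.measurableSet.inter
      (measurableSet_le (measurable_fderiv ℝ f).norm measurable_const)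
  -- local claim
  have claim : ∀ x ∈ K, ∃ W : Set (EuclideanSpace ℝ (Fin 2)), IsOpen W ∧ x ∈ W ∧ ∃ C : ℝ,
      0 ≤ C ∧ ∀ γ : ℝ, 0 < γ → γ ≤ ε →
        volume ({y ∈ K | ‖fderiv ℝ f y‖ ≤ γ} ∩ W) ≤ ENNReal.ofReal (C * γ) := by
    intro x hx
    by_cases hbig : ε < ‖fderiv ℝ f x‖
    · -- gradient large near x: the set is empty there
      have hcont : ContinuousAt (fun y => ‖fderiv ℝ f y‖) x :=
        ((hf.continuousOn_fderiv_of_isOpen hU (by norm_num)).continuousAt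
          (hU.mem_nhds (hKU hx))).norm
      have hnb : {y | ε < ‖fderiv ℝ f y‖} ∈ nhds x := hcont (Ioi_mem_nhds hbig)
      obtain ⟨W, hWsub, hWopen, hWmem⟩ := mem_nhds_iff.1 hnb
      refine ⟨W, hWopen, hWmem, 0, le_rfl, fun γ hγ hγε => ?_⟩
      have : {y ∈ K | ‖fderiv ℝ f y‖ ≤ γ} ∩ W = ∅ := by
        ext y
        simp only [mem_inter_iff, mem_sep_iff, mem_empty_iff_false, iff_false]
        rintro ⟨⟨-, h1⟩, h2⟩
        exact absurd (h1.trans hγε) (not_le.2 (hWsub h2))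
      rw [this]
      simp
    · -- gradient small: nondegenerate Hessian entry
      push_neg at hbig
      obtain ⟨i, j, hij⟩ := hnd x hx hbig
      obtain ⟨e, k', hk', hpres, he⟩ := exists_equiv i
      have hcH : ContinuousAt (fun y => hess2 f y i j) x :=
        (hess_cont U f hU hf i j).continuousAt (hU.mem_nhds (hKU hx))
      have hnb : {y | dist (hess2 f y i j) (hess2 f x i j) < ε / 2} ∈ nhds x :=
        hcH (Metric.ball_mem_nhds _ (by linarith))
      obtain ⟨r, hrpos, hrsub⟩ := Metric.mem_nhds_iff.1 (Filter.inter_mem hnb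
        (hU.mem_nhds (hKU hx)))
      have hball : Metric.ball x r ⊆ U := fun y hy => (hrsub hy).2
      have hH : ∀ y ∈ Metric.ball x r, ε / 2 ≤ |hess2 f y i j| := by
        intro y hy
        have h1 : dist (hess2 f y i j) (hess2 f x i j) < ε / 2 := (hrsub hy).1
        rw [Real.dist_eq] at h1
        have h2 : ε ≤ |hess2 f x i j| := hij
        calc ε / 2 = ε - ε / 2 := by ring
          _ ≤ |hess2 f x i j| - |hess2 f y i j - hess2 f x i j| := by
              have := abs_sub_comm (hess2 f y i j) (hess2 f x i j)
              linarith
          _ ≤ |hess2 f y i j| := by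
              have := abs_sub_abs_le_abs_sub (hess2 f x i j) (hess2 f y i j)
              rw [abs_sub_comm (hess2 f x i j) (hess2 f y i j)] at this
              linarith
      refine ⟨Metric.ball x r, Metric.isOpen_ball, Metric.mem_ball_self hrpos,
        16 * r / ε, by positivity, fun γ hγ hγε => ?_⟩
      set T := {y ∈ K | ‖fderiv ℝ f y‖ ≤ γ} ∩ Metric.ball x r with hT
      have hTm : MeasurableSet T := (hSm γ).inter Metric.isOpen_ball.measurableSet
      set A : Set (ℝ × ℝ) := ⇑e.symm ⁻¹' T with hA
      have hAm : MeasurableSet A := e.symm.measurable hTm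
      have hvolTA : volume T = volume A := ((hpres.symm e).measure_preimage hTm.nullMeasurableSet).symm
      have hAmem : ∀ p : ℝ × ℝ, p ∈ A → ∃ y ∈ T, (y k', y i) = p := by
        intro p hp
        exact ⟨e.symm p, hp, by rw [← he (e.symm p), MeasurableEquiv.apply_symm_apply]⟩
      have hproj : ∀ p ∈ A, p.1 ∈ Icc (x k' - r) (x k' + r) := by
        intro p hp
        obtain ⟨y, hyT, hey⟩ := hAmem p hp
        have hyball : y ∈ Metric.ball x r := hyT.2
        have h1 : |y k' - x k'| ≤ dist y x := coord_le_dist y x k'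
        have h2 : dist y x < r := Metric.mem_ball.1 hyball
        have : p.1 = y k' := by rw [← hey]
        rw [this, abs_le] at *
        exact ⟨by linarith [h1.1], by linarith [h1.2]⟩
      have hsl : ∀ t a b : ℝ, (t, a) ∈ A → (t, b) ∈ A → |a - b| ≤ 4 * γ / ε := by
        intro t a b hab1 hab2
        obtain ⟨y, hyT, hey⟩ := hAmem _ hab1
        obtain ⟨z, hzT, hez⟩ := hAmem _ hab2
        have hyk : y k' = t := congrArg Prod.fst hey
        have hyi : y i = a := congrArg Prod.snd hey
        have hzk : z k' = t := congrArg Prod.fst hez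
        have hzi : z i = b := congrArg Prod.snd hez
        have hcoord : ∀ k, k ≠ i → y k = z k := by
          intro k hk
          rw [hk' k hk, hyk, hzk]
        rw [← hyi, ← hzi]
        exact slice_wrap U f ε γ hε hγ hU hf x r hball i j hH y z hyT.2 hzT.2
          hyT.1.2 hzT.1.2 hcoord
      calc volume T = volume A := hvolTA
        _ ≤ ENNReal.ofReal (2 * (4 * γ / ε)) * ENNReal.ofReal (2 * r) :=
            aux_fub A hAm (x k') r (4 * γ / ε) hproj hsl
        _ ≤ ENNReal.ofReal (16 * r / ε * γ) := by
            rw [← ENNReal.ofReal_mul (by positivity)]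
            exact ENNReal.ofReal_le_ofReal (le_of_eq (by ring))
  -- compactness
  choose W hWopen hWmem C hC0 hCvol using claim
  obtain ⟨t, hcov⟩ := hK.elim_nhds_subcover' (fun x hx => W x hx)
    (fun x hx => (hWopen x hx).mem_nhds (hWmem x hx))
  refine ⟨∑ x ∈ t, C x.1 x.2, fun γ hγ hγε => ?_⟩
  have hsub : {x ∈ K | ‖fderiv ℝ f x‖ ≤ γ} ⊆
      ⋃ x ∈ t, ({y ∈ K | ‖fderiv ℝ f y‖ ≤ γ} ∩ W x.1 x.2) := by
    intro y hy
    obtain ⟨x, hx, hyW⟩ := mem_iUnion₂.1 (hcov hy.1)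
    exact mem_iUnion₂.2 ⟨x, hx, hy, hyW⟩
  calc volume {x ∈ K | ‖fderiv ℝ f x‖ ≤ γ}
      ≤ volume (⋃ x ∈ t, ({y ∈ K | ‖fderiv ℝ f y‖ ≤ γ} ∩ W x.1 x.2)) := measure_mono hsub
    _ ≤ ∑ x ∈ t, volume ({y ∈ K | ‖fderiv ℝ f y‖ ≤ γ} ∩ W x.1 x.2) :=
        measure_biUnion_finset_le t _
    _ ≤ ∑ x ∈ t, ENNReal.ofReal (C x.1 x.2 * γ) :=
        Finset.sum_le_sum (fun x _ => hCvol x.1 x.2 γ hγ hγε)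
    _ = ENNReal.ofReal (∑ x ∈ t, C x.1 x.2 * γ) :=
        (ENNReal.ofReal_sum_of_nonneg (fun x _ => mul_nonneg (hC0 x.1 x.2) hγ.le)).symm
    _ = ENNReal.ofReal ((∑ x ∈ t, C x.1 x.2) * γ) := by rw [Finset.sum_mul]
end
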